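/- arXiv:1202.0711 — 7 statements merged into one kernel-verified Lean document; each statement's English description precedes it below -/
import Mathlib

section
/- Let R be a commutative ring, n ≥ 1, Λ = M_{n×n}(R), and M a finitely presented Λ-module. Then for every 1 ≤ i ≤ n one has Fit_R(e_{ii}M) = Fit_R(e_{11}M); that is, Fit_Λ(M) = Fit_R(e_{ii}M) for any i. -/
open Matrix

section FitDefs

variable (R : Type*) [CommRing R]

/-- The ideal of all maximal minors of a rectangular matrix (this is the zero
ideal when there are fewer rows than columns). -/
noncomputable def minorsIdeal {a b : ℕ} (H : Matrix (Fin a) (Fin b) R) : Ideal R :=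
  Ideal.span {x : R | ∃ f : Fin b → Fin a, x = ((H.submatrix f id).det)}

/-- `(H, π)` is a finite presentation `R^a --H--> R^b --π->> M` of the `R`-module `M`,
where `H` acts by right multiplication on row vectors. -/
def IsPresentation {a b : ℕ} (H : Matrix (Fin a) (Fin b) R) (M : Type*)
    [AddCommGroup M] [Module R M] (π : (Fin b → R) →ₗ[R] M) : Prop :=
  Function.Surjective π ∧ LinearMap.ker π = LinearMap.range H.vecMulLinear

/-- The (zeroth) Fitting ideal of an `R`-module, defined as the supremum over all
finite presentations of the ideal of maximal minors; for a finitely presented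
module this agrees with the classical Fitting ideal computed from any single
presentation, since the latter is independent of the chosen presentation. -/
noncomputable def fitIdeal (M : Type*) [AddCommGroup M] [Module R M] : Ideal R :=
  ⨆ (a : ℕ) (b : ℕ) (H : Matrix (Fin a) (Fin b) R) (π : (Fin b → R) →ₗ[R] M)
    (_ : IsPresentation R H M π), minorsIdeal R H

end FitDefs

section MatrixModule

variable (n : ℕ) (R : Type*) [CommRing R] (M : Type*) [AddCommGroup M]
  [Module (Matrix (Fin n) (Fin n) R) M] [Module R M]
  [IsScalarTower R (Matrix (Fin n) (Fin n) R) M]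

/-- Left multiplication by the matrix unit `e_{ii}` as an `R`-linear endomorphism
of a module over the matrix ring. -/
noncomputable def eMul (i : Fin n) : M →ₗ[R] M where
  toFun x := Matrix.single i i (1 : R) • x
  map_add' x y := smul_add _ x y
  map_smul' r x := (smul_comm r (Matrix.single i i (1 : R)) x).symm

/-- The `R`-submodule `e_{ii}M` of a module `M` over the matrix ring. -/
noncomputable def eComponent (i : Fin n) : Submodule R M :=
  LinearMap.range (eMul n R M i)

end MatrixModule

section AuxLemmas

theorem fitIdeal_le_of_equiv {R : Type*} [CommRing R] {M N : Type*} [AddCommGroup M]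
    [Module R M] [AddCommGroup N] [Module R N] (e : M ≃ₗ[R] N) :
    fitIdeal R M ≤ fitIdeal R N := by
  refine iSup_le fun a => iSup_le fun b => iSup_le fun H => iSup_le fun π => iSup_le fun hπ => ?_
  have hπ' : IsPresentation R H N (e.toLinearMap ∘ₗ π) := by
    refine ⟨e.surjective.comp hπ.1, ?_⟩
    rw [LinearMap.ker_comp, LinearEquiv.ker, Submodule.comap_bot, hπ.2]
  calc minorsIdeal R H ≤ ⨆ (_ : IsPresentation R H N (e.toLinearMap ∘ₗ π)), minorsIdeal R H :=
        le_iSup (fun (_ : IsPresentation R H N (e.toLinearMap ∘ₗ π)) => minorsIdeal R H) hπ'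
    _ ≤ _ := by
        refine le_trans ?_ (le_iSup _ a)
        refine le_trans ?_ (le_iSup _ b)
        refine le_trans ?_ (le_iSup _ H)
        exact le_iSup
          (fun π' => ⨆ (_ : IsPresentation R H N π'), minorsIdeal R H) (e.toLinearMap ∘ₗ π)

theorem fitIdeal_congr {R : Type*} [CommRing R] {M N : Type*} [AddCommGroup M]
    [Module R M] [AddCommGroup N] [Module R N] (e : M ≃ₗ[R] N) :
    fitIdeal R M = fitIdeal R N :=
  le_antisymm (fitIdeal_le_of_equiv e) (fitIdeal_le_of_equiv e.symm)

variable {n : ℕ} {R : Type*} [CommRing R] {M : Type*} [AddCommGroup M]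
  [Module (Matrix (Fin n) (Fin n) R) M] [Module R M]
  [IsScalarTower R (Matrix (Fin n) (Fin n) R) M]

theorem mem_eComponent_iff {i : Fin n} {x : M} :
    x ∈ eComponent n R M i ↔ (Matrix.single i i (1 : R)) • x = x := by
  constructor
  · rintro ⟨y, rfl⟩
    show (Matrix.single i i (1 : R)) • (Matrix.single i i (1 : R)) • y = _
    rw [← mul_smul, Matrix.single_mul_single_same, one_mul]
    rfl
  · intro h
    exact ⟨x, h⟩

/-- Multiplication by `e_{ji}` maps `e_{ii}M` to `e_{jj}M`, `R`-linearly. -/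
noncomputable def eCompMap (i j : Fin n) : eComponent n R M i →ₗ[R] eComponent n R M j where
  toFun x := ⟨Matrix.single j i (1 : R) • (x : M), by
    rw [mem_eComponent_iff, ← mul_smul, Matrix.single_mul_single_same, one_mul]⟩
  map_add' x y := by
    ext
    exact smul_add _ _ _
  map_smul' r x := by
    ext
    exact smul_comm _ r _

/-- The `R`-linear isomorphism `e_{ii}M ≃ e_{jj}M` given by multiplication by `e_{ji}`
and `e_{ij}`. -/
noncomputable def eCompEquiv (i j : Fin n) : eComponent n R M i ≃ₗ[R] eComponent n R M j :=
  { eCompMap i j with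
    invFun := eCompMap j i
    left_inv := fun x => by
      ext
      show Matrix.single i j (1 : R) • Matrix.single j i (1 : R) • (x : M)
        = (x : M)
      rw [← mul_smul, Matrix.single_mul_single_same, one_mul]
      exact mem_eComponent_iff.mp x.2
    right_inv := fun x => by
      ext
      show Matrix.single j i (1 : R) • Matrix.single i j (1 : R) • (x : M)
        = (x : M)
      rw [← mul_smul, Matrix.single_mul_single_same, one_mul]
      exact mem_eComponent_iff.mp x.2 }

end AuxLemmas

/-- For a finitely presented module `M` over `Λ = M_{n×n}(R)` and any `1 ≤ i ≤ n`,
`Fit_R(e_{ii}M) = Fit_R(e_{11}M)`; that is, `Fit_Λ(M) = Fit_R(e_{ii}M)` for any `i`. -/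
theorem fitIdeal_eComponent_eq (n : ℕ) (hn : 0 < n) (R : Type*) [CommRing R] (M : Type*)
    [AddCommGroup M] [Module (Matrix (Fin n) (Fin n) R) M] [Module R M]
    [IsScalarTower R (Matrix (Fin n) (Fin n) R) M]
    [Module.FinitePresentation (Matrix (Fin n) (Fin n) R) M] (i : Fin n) :
    fitIdeal R (eComponent n R M i) = fitIdeal R (eComponent n R M ⟨0, hn⟩) :=
  fitIdeal_congr (eCompEquiv i ⟨0, hn⟩)
end

section
/- Let R be a commutative ring, n ≥ 1, Λ = M_{n×n}(R), and M a finitely presented Λ-module. Then Fit_Λ(M) ⊆ Ann_R(M), where Ann_R(M) = {r ∈ R : r·M = 0} is the annihilator of M for the R-action via scalar matrices. -/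
open Matrix

theorem fit_le_ann (R : Type*) [CommRing R] (N : Type*) [AddCommGroup N] [Module R N] :
    fitIdeal R N ≤ Module.annihilator R N := by
  refine iSup_le fun a => iSup_le fun b => iSup_le fun H => iSup_le fun π => iSup_le fun hp => ?_
  rw [minorsIdeal, Ideal.span_le]
  rintro x ⟨f, rfl⟩
  rw [SetLike.mem_coe, Module.mem_annihilator]
  intro m
  obtain ⟨v, rfl⟩ := hp.1 m
  rw [← _root_.map_smul]
  suffices h : (H.submatrix f id).det • v ∈ LinearMap.ker π by
    rwa [LinearMap.mem_ker] at h
  rw [hp.2]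
  refine ⟨(v ᵥ* (H.submatrix f id).adjugate) ᵥ* ((1 : Matrix (Fin a) (Fin a) R).submatrix f id), ?_⟩
  have key : ((1 : Matrix (Fin a) (Fin a) R).submatrix f id) * H = H.submatrix f id := by
    ext k j
    simp [Matrix.mul_apply, Matrix.one_apply]
  rw [Matrix.vecMulLinear_apply, Matrix.vecMul_vecMul, key, Matrix.vecMul_vecMul,
    Matrix.adjugate_mul]
  funext j
  simp [Matrix.vecMul, dotProduct, Matrix.one_apply, mul_comm]

/-- For a finitely presented module `M` over `Λ = M_{n×n}(R)`, the Fitting invariant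
`Fit_Λ(M) = Fit_R(e_{11}M)` is contained in the annihilator `Ann_R(M)` of `M` for the
`R`-action via scalar matrices. -/
theorem fitIdeal_le_annihilator (n : ℕ) (hn : 0 < n) (R : Type*) [CommRing R] (M : Type*)
    [AddCommGroup M] [Module (Matrix (Fin n) (Fin n) R) M] [Module R M]
    [IsScalarTower R (Matrix (Fin n) (Fin n) R) M]
    [Module.FinitePresentation (Matrix (Fin n) (Fin n) R) M] :
    fitIdeal R (eComponent n R M ⟨0, hn⟩) ≤ Module.annihilator R M := by
  refine le_trans (fit_le_ann R _) ?_
  intro r hr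
  rw [Module.mem_annihilator] at hr ⊢
  intro x
  set z : Fin n := ⟨0, hn⟩ with hz
  have hone : (∑ i : Fin n, Matrix.single i i (1 : R)) = 1 := by
    ext p q
    simp only [Matrix.sum_apply, Matrix.single, Matrix.of_apply, Matrix.one_apply]
    by_cases h : p = q
    · subst h
      simp
    · rw [if_neg h]
      exact Finset.sum_eq_zero fun j _ => if_neg (by rintro ⟨rfl, rfl⟩; exact h rfl)
  have hx : r • x = ∑ i : Fin n, r • (Matrix.single i i (1 : R) • x) := by
    rw [← Finset.smul_sum, ← Finset.sum_smul, hone, one_smul]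
  rw [hx]
  refine Finset.sum_eq_zero fun i _ => ?_
  have h1 : Matrix.single i i (1 : R) • x
      = Matrix.single i z (1 : R) • (Matrix.single z i (1 : R) • x) := by
    rw [← mul_smul, Matrix.single_mul_single_same, one_mul]
  have h2 : Matrix.single z i (1 : R) • x ∈ eComponent n R M z :=
    ⟨Matrix.single z i (1 : R) • x, by
      show Matrix.single z z (1 : R) • Matrix.single z i (1 : R) • x
          = Matrix.single z i (1 : R) • x
      rw [← mul_smul, Matrix.single_mul_single_same, one_mul]⟩
  have h3 := hr ⟨_, h2⟩
  have h4 : r • (Matrix.single z i (1 : R) • x) = 0 := congrArg Subtype.val h3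
  rw [h1, smul_comm, h4, smul_zero]
end

section
/- Let R be a commutative ring, n ≥ 1, Λ = M_{n×n}(R), and let M₁ --ι--> M₂ ->> M₃ be an exact sequence of finitely presented Λ-modules (the map ι is not required to be injective, and the second map is surjective). Then Fit_Λ(M₁) · Fit_Λ(M₃) ⊆ Fit_Λ(M₂). -/
open Matrix

/-! ### Auxiliary material -/

/-- The obvious linear map `A^m → M` sending the standard basis to `v`. -/
def combo (A : Type*) [Ring A] {M : Type*} [AddCommGroup M] [Module A M]
    {m : ℕ} (v : Fin m → M) : (Fin m → A) →ₗ[A] M where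
  toFun w := ∑ i, w i • v i
  map_add' w₁ w₂ := by simp [add_smul, Finset.sum_add_distrib]
  map_smul' a w := by simp [Finset.smul_sum, mul_smul]

lemma combo_surj (A : Type*) [Ring A] {M : Type*} [AddCommGroup M] [Module A M]
    {m : ℕ} (v : Fin m → M) (hv : Submodule.span A (Set.range v) = ⊤) :
    Function.Surjective (combo A v) := by
  intro x
  have hx : x ∈ Submodule.span A (Set.range v) := hv ▸ Submodule.mem_top
  induction hx using Submodule.span_induction with
  | mem y hy =>
    obtain ⟨i, rfl⟩ := hy
    exact ⟨Pi.single i 1, by simp [combo, Pi.single_apply]⟩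
  | zero => exact ⟨0, by simp [combo]⟩
  | add y z _ _ hy hz =>
    obtain ⟨w₁, rfl⟩ := hy; obtain ⟨w₂, rfl⟩ := hz
    exact ⟨w₁ + w₂, map_add _ _ _⟩
  | smul a y _ hy =>
    obtain ⟨w, rfl⟩ := hy
    exact ⟨a • w, map_smul _ _ _⟩

/-- Restriction of scalars along a module-finite free algebra preserves finite presentation. -/
lemma fp_restrict (R A M : Type*) [CommRing R] [Ring A] [Algebra R A]
    [Module.Finite R A] [Module.Free R A]
    [AddCommGroup M] [Module A M] [Module R M] [IsScalarTower R A M]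
    [Module.FinitePresentation A M] : Module.FinitePresentation R M := by
  obtain ⟨m, v, hv⟩ := Module.Finite.exists_fin (R := A) (M := M)
  set φ : (Fin m → A) →ₗ[A] M := combo A v with hφ
  have hsurj : Function.Surjective φ := combo_surj A v hv
  have hker : (LinearMap.ker φ).FG := Module.FinitePresentation.fg_ker φ hsurj
  have hkerR : (LinearMap.ker (φ.restrictScalars R)).FG := by
    rw [LinearMap.ker_restrictScalars]
    haveI : Module.Finite A (LinearMap.ker φ) := Module.Finite.iff_fg.mpr hker
    haveI : Module.Finite R (LinearMap.ker φ) := Module.Finite.trans A _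
    exact Module.Finite.iff_fg.mp ‹Module.Finite R (LinearMap.ker φ)›
  haveI : Module.FinitePresentation R (Fin m → A) :=
    Module.finitePresentation_of_projective _ _
  exact Module.finitePresentation_of_surjective (φ.restrictScalars R) hsurj hkerR

section Comp

variable (n : ℕ) (R : Type*) [CommRing R] (M : Type*) [AddCommGroup M]
  [Module (Matrix (Fin n) (Fin n) R) M] [Module R M]
  [IsScalarTower R (Matrix (Fin n) (Fin n) R) M] (i : Fin n)

lemma eMul_idem (x : M) : eMul n R M i (eMul n R M i x) = eMul n R M i x := by
  show Matrix.single i i (1 : R) • Matrix.single i i (1 : R) • x = _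
  rw [smul_smul, Matrix.single_mul_single_same, one_mul]; rfl

lemma smul_mem_eComponent (z : M) (hz : z ∈ eComponent n R M i) :
    Matrix.single i i (1 : R) • z = z := by
  obtain ⟨y, rfl⟩ := hz
  exact eMul_idem n R M i y

lemma fp_eComponent [Module.FinitePresentation R M] :
    Module.FinitePresentation R (eComponent n R M i) := by
  set p := (eMul n R M i).rangeRestrict with hp
  have hsurj : Function.Surjective p := LinearMap.surjective_rangeRestrict _
  have hker : (LinearMap.ker p).FG := by
    rw [hp, LinearMap.ker_rangeRestrict]
    have : LinearMap.ker (eMul n R M i) = LinearMap.range (LinearMap.id - eMul n R M i) := by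
      ext x
      constructor
      · intro hx
        refine ⟨x, ?_⟩
        simp only [LinearMap.sub_apply, LinearMap.id_apply]
        rw [LinearMap.mem_ker.mp hx, sub_zero]
      · rintro ⟨y, rfl⟩
        simp only [LinearMap.mem_ker, LinearMap.sub_apply, LinearMap.id_apply, map_sub,
          eMul_idem n R M i y, sub_self]
    rw [this, LinearMap.range_eq_map]
    exact (Module.Finite.fg_top (R := R) (M := M)).map _
  exact Module.finitePresentation_of_surjective p hsurj hker

end Comp

section Maps

variable (n : ℕ) (R : Type*) [CommRing R]
variable {M₁ M₂ : Type*} [AddCommGroup M₁] [AddCommGroup M₂]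
  [Module (Matrix (Fin n) (Fin n) R) M₁] [Module (Matrix (Fin n) (Fin n) R) M₂]
  [Module R M₁] [Module R M₂]
  [IsScalarTower R (Matrix (Fin n) (Fin n) R) M₁]
  [IsScalarTower R (Matrix (Fin n) (Fin n) R) M₂]
  (i : Fin n) (ι : M₁ →ₗ[Matrix (Fin n) (Fin n) R] M₂)

/-- The `R`-linear map induced on `e_{ii}`-components by a map of modules over the
matrix ring. -/
noncomputable def compMap : eComponent n R M₁ i →ₗ[R] eComponent n R M₂ i :=
  (ι.restrictScalars R).restrict (fun x hx => by
    obtain ⟨y, rfl⟩ := hx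
    exact ⟨ι y, (map_smul ι (Matrix.single i i (1 : R)) y).symm⟩)

@[simp] lemma compMap_apply (x : eComponent n R M₁ i) :
    (compMap n R i ι x : M₂) = ι (x : M₁) := rfl

end Maps

section Big

variable {R : Type*} [CommRing R] {a₁ a₃ k b₁ b₃ : ℕ}
  (H₁ : Matrix (Fin a₁) (Fin b₁) R) (H₃ : Matrix (Fin a₃) (Fin b₃) R)
  (C : Fin a₃ → Fin b₁ → R) (K : Fin k → Fin (b₁ + b₃) → R)

/-- The presentation matrix of the middle module of an extension. -/
def bigRows : Matrix (Fin ((a₁ + a₃) + k)) (Fin (b₁ + b₃)) R :=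
  Matrix.of (Fin.append (Fin.append (fun p => Fin.append (H₁ p) 0)
    (fun t => Fin.append (C t) (H₃ t))) K)

lemma bigRows_row₁ (p : Fin a₁) :
    bigRows H₁ H₃ C K (Fin.castAdd k (Fin.castAdd a₃ p)) = Fin.append (H₁ p) 0 := by
  show Fin.append _ K _ = _
  rw [Fin.append_left, Fin.append_left]

lemma bigRows_row₃ (t : Fin a₃) :
    bigRows H₁ H₃ C K (Fin.castAdd k (Fin.natAdd a₁ t)) = Fin.append (C t) (H₃ t) := by
  show Fin.append _ K _ = _
  rw [Fin.append_left, Fin.append_right]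

lemma bigRows_rowK (l : Fin k) :
    bigRows H₁ H₃ C K (Fin.natAdd (a₁ + a₃) l) = K l := by
  show Fin.append _ K _ = _
  rw [Fin.append_right]

/-- The row selection realizing a product of maximal minors. -/
def rowSel (σ : Fin b₁ → Fin a₁) (τ : Fin b₃ → Fin a₃) :
    Fin (b₁ + b₃) → Fin ((a₁ + a₃) + k) :=
  Fin.append (fun i => Fin.castAdd k (Fin.castAdd a₃ (σ i)))
    (fun j => Fin.castAdd k (Fin.natAdd a₁ (τ j)))

lemma det_bigRows (σ : Fin b₁ → Fin a₁) (τ : Fin b₃ → Fin a₃) :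
    (((bigRows H₁ H₃ C K).submatrix (rowSel (k := k) σ τ) id).det)
      = (H₁.submatrix σ id).det * (H₃.submatrix τ id).det := by
  have h : (bigRows H₁ H₃ C K).submatrix (rowSel (k := k) σ τ) id =
      (Matrix.fromBlocks (H₁.submatrix σ id) 0 (Matrix.of fun t i => C (τ t) i)
        (H₃.submatrix τ id)).submatrix finSumFinEquiv.symm finSumFinEquiv.symm := by
    ext i j
    refine Fin.addCases (fun p => ?_) (fun t => ?_) i <;>
      refine Fin.addCases (fun q => ?_) (fun u => ?_) j <;>
      simp only [Matrix.submatrix_apply, id_eq, rowSel, Fin.append_left, Fin.append_right,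
        bigRows_row₁, bigRows_row₃, finSumFinEquiv_symm_apply_castAdd,
        finSumFinEquiv_symm_apply_natAdd, Matrix.fromBlocks_apply₁₁, Matrix.fromBlocks_apply₁₂,
        Matrix.fromBlocks_apply₂₁, Matrix.fromBlocks_apply₂₂, Matrix.of_apply,
        Pi.zero_apply, Matrix.zero_apply]
  rw [h, Matrix.det_submatrix_equiv_self, Matrix.det_fromBlocks_zero₁₂]

end Big

section Key

variable {R : Type*} [CommRing R]

theorem minors_mul_le_fit {N₁ N₂ N₃ : Type*} [AddCommGroup N₁] [AddCommGroup N₂] [AddCommGroup N₃]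
    [Module R N₁] [Module R N₂] [Module R N₃] [Module.FinitePresentation R N₂]
    (f : N₁ →ₗ[R] N₂) (g : N₂ →ₗ[R] N₃) (hg : Function.Surjective g)
    (hex : LinearMap.range f = LinearMap.ker g)
    {a₁ b₁ a₃ b₃ : ℕ} (H₁ : Matrix (Fin a₁) (Fin b₁) R) (π₁ : (Fin b₁ → R) →ₗ[R] N₁)
    (h₁ : IsPresentation R H₁ N₁ π₁)
    (H₃ : Matrix (Fin a₃) (Fin b₃) R) (π₃ : (Fin b₃ → R) →ₗ[R] N₃)
    (h₃ : IsPresentation R H₃ N₃ π₃) :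
    minorsIdeal R H₁ * minorsIdeal R H₃ ≤ fitIdeal R N₂ := by
  classical
  obtain ⟨h₁s, h₁k⟩ := h₁
  obtain ⟨h₃s, h₃k⟩ := h₃
  -- rows of H₁ are relations of π₁, rows of H₃ relations of π₃
  have hrow₁ : ∀ p, π₁ (H₁ p) = 0 := by
    intro p
    have hmem : H₁ p ∈ LinearMap.range H₁.vecMulLinear := ⟨Pi.single p 1, by
      ext j; simp [Matrix.vecMulLinear_apply, Matrix.vecMul, dotProduct, Pi.single_apply]⟩
    rw [← h₁k] at hmem; exact hmem
  have hrow₃ : ∀ t, π₃ (H₃ t) = 0 := by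
    intro t
    have hmem : H₃ t ∈ LinearMap.range H₃.vecMulLinear := ⟨Pi.single t 1, by
      ext j; simp [Matrix.vecMulLinear_apply, Matrix.vecMul, dotProduct, Pi.single_apply]⟩
    rw [← h₃k] at hmem; exact hmem
  -- lifts of the generators of N₃
  choose y hy using fun j : Fin b₃ => hg (π₃ (Pi.single j 1))
  set s : (Fin b₃ → R) →ₗ[R] N₂ := combo R y with hs
  have hgs : g ∘ₗ s = π₃ := by
    apply Module.Basis.ext (Pi.basisFun R (Fin b₃))
    intro j
    have h1 : s (Pi.single j 1) = y j := by simp [hs, combo, Pi.single_apply]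
    simp only [Pi.basisFun_apply, LinearMap.comp_apply]
    rw [h1, hy]
  -- the surjection π₂ onto N₂
  set L₁ : (Fin (b₁ + b₃) → R) →ₗ[R] (Fin b₁ → R) := LinearMap.funLeft R R (Fin.castAdd b₃)
    with hL₁
  set L₃ : (Fin (b₁ + b₃) → R) →ₗ[R] (Fin b₃ → R) := LinearMap.funLeft R R (Fin.natAdd b₁)
    with hL₃
  set π₂ : (Fin (b₁ + b₃) → R) →ₗ[R] N₂ := (f ∘ₗ π₁ ∘ₗ L₁) + (s ∘ₗ L₃) with hπ₂
  have hπ₂app : ∀ (u : Fin b₁ → R) (w : Fin b₃ → R),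
      π₂ (Fin.append u w) = f (π₁ u) + s w := by
    intro u w
    have e1 : L₁ (Fin.append u w) = u := funext fun i => Fin.append_left u w i
    have e3 : L₃ (Fin.append u w) = w := funext fun j => Fin.append_right u w j
    simp only [hπ₂, LinearMap.add_apply, LinearMap.comp_apply, e1, e3]
  have hπ₂s : Function.Surjective π₂ := by
    intro m
    obtain ⟨w, hw⟩ := h₃s (g m)
    have hmem : m - s w ∈ LinearMap.ker g := by
      rw [LinearMap.mem_ker, map_sub, ← LinearMap.comp_apply, hgs, hw, sub_self]
    rw [← hex] at hmem
    obtain ⟨x, hx⟩ := hmem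
    obtain ⟨u, hu⟩ := h₁s x
    refine ⟨Fin.append u w, ?_⟩
    rw [hπ₂app, hu, hx, sub_add_cancel]
  -- finitely many generators for the kernel of π₂
  obtain ⟨k, K, hK⟩ := Submodule.fg_iff_exists_fin_generating_family.mp
    (Module.FinitePresentation.fg_ker π₂ hπ₂s)
  -- the correction matrix C
  have hCex : ∀ t : Fin a₃, ∃ u : Fin b₁ → R, f (π₁ u) + s (H₃ t) = 0 := by
    intro t
    have h1 : s (H₃ t) ∈ LinearMap.ker g := by
      rw [LinearMap.mem_ker, ← LinearMap.comp_apply, hgs, hrow₃ t]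
    rw [← hex] at h1
    obtain ⟨x, hx⟩ := h1
    obtain ⟨u, hu⟩ := h₁s (-x)
    exact ⟨u, by rw [hu, map_neg, hx, neg_add_cancel]⟩
  choose C hC using hCex
  -- all rows of the big matrix are relations of π₂
  have hrowker : ∀ i, bigRows H₁ H₃ C K i ∈ LinearMap.ker π₂ := by
    intro i
    refine Fin.addCases (fun q => ?_) (fun l => ?_) i
    · refine Fin.addCases (fun p => ?_) (fun t => ?_) q
      · rw [LinearMap.mem_ker, bigRows_row₁, hπ₂app, hrow₁ p, map_zero, map_zero, add_zero]
      · rw [LinearMap.mem_ker, bigRows_row₃, hπ₂app, hC t]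
    · rw [bigRows_rowK]
      have : K l ∈ Submodule.span R (Set.range K) := Submodule.subset_span ⟨l, rfl⟩
      rwa [hK] at this
  have hpres : IsPresentation R (bigRows H₁ H₃ C K) N₂ π₂ := by
    refine ⟨hπ₂s, ?_⟩
    rw [range_vecMulLinear]
    apply le_antisymm
    · rw [← hK]
      apply Submodule.span_mono
      rintro _ ⟨l, rfl⟩
      exact ⟨Fin.natAdd (a₁ + a₃) l, bigRows_rowK H₁ H₃ C K l⟩
    · rw [Submodule.span_le]
      rintro _ ⟨i, rfl⟩
      exact hrowker i
  have hle : minorsIdeal R (bigRows H₁ H₃ C K) ≤ fitIdeal R N₂ :=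
    le_iSup_of_le ((a₁ + a₃) + k) (le_iSup_of_le (b₁ + b₃)
      (le_iSup_of_le (bigRows H₁ H₃ C K) (le_iSup_of_le π₂ (le_iSup_of_le hpres le_rfl))))
  refine le_trans ?_ hle
  rw [show minorsIdeal R H₁ = Ideal.span {x : R | ∃ f : Fin b₁ → Fin a₁,
      x = ((H₁.submatrix f id).det)} from rfl,
    show minorsIdeal R H₃ = Ideal.span {x : R | ∃ f : Fin b₃ → Fin a₃,
      x = ((H₃.submatrix f id).det)} from rfl, Ideal.span_mul_span']
  refine Ideal.span_le.mpr ?_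
  rintro x ⟨d₁, ⟨σ, rfl⟩, d₃, ⟨τ, rfl⟩, rfl⟩
  exact Submodule.subset_span ⟨rowSel σ τ, (det_bigRows H₁ H₃ C K σ τ).symm⟩

theorem fit_mul_le {N₁ N₂ N₃ : Type*} [AddCommGroup N₁] [AddCommGroup N₂] [AddCommGroup N₃]
    [Module R N₁] [Module R N₂] [Module R N₃] [Module.FinitePresentation R N₂]
    (f : N₁ →ₗ[R] N₂) (g : N₂ →ₗ[R] N₃) (hg : Function.Surjective g)
    (hex : LinearMap.range f = LinearMap.ker g) :
    fitIdeal R N₁ * fitIdeal R N₃ ≤ fitIdeal R N₂ := by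
  have h1 : fitIdeal R N₁ = ⨆ (a : ℕ) (b : ℕ) (H : Matrix (Fin a) (Fin b) R)
      (π : (Fin b → R) →ₗ[R] N₁) (_ : IsPresentation R H N₁ π), minorsIdeal R H := rfl
  have h3 : fitIdeal R N₃ = ⨆ (a : ℕ) (b : ℕ) (H : Matrix (Fin a) (Fin b) R)
      (π : (Fin b → R) →ₗ[R] N₃) (_ : IsPresentation R H N₃ π), minorsIdeal R H := rfl
  rw [h1, h3]
  simp_rw [Submodule.iSup_mul, Submodule.mul_iSup, iSup_le_iff]
  intro a₁ b₁ H₁ π₁ hp₁ a₃ b₃ H₃ π₃ hp₃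
  exact minors_mul_le_fit f g hg hex H₁ π₁ hp₁ H₃ π₃ hp₃

end Key

/-- If `M₁ --ι--> M₂ ->> M₃` is an exact sequence of finitely presented modules over
`Λ = M_{n×n}(R)` (with `ι` not necessarily injective and the second map surjective),
then `Fit_Λ(M₁) · Fit_Λ(M₃) ⊆ Fit_Λ(M₂)`. -/
theorem fitIdeal_mul_le_of_exact (n : ℕ) (hn : 0 < n) (R : Type*) [CommRing R]
    (M₁ M₂ M₃ : Type*) [AddCommGroup M₁] [AddCommGroup M₂] [AddCommGroup M₃]
    [Module (Matrix (Fin n) (Fin n) R) M₁] [Module (Matrix (Fin n) (Fin n) R) M₂]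
    [Module (Matrix (Fin n) (Fin n) R) M₃]
    [Module R M₁] [Module R M₂] [Module R M₃]
    [IsScalarTower R (Matrix (Fin n) (Fin n) R) M₁]
    [IsScalarTower R (Matrix (Fin n) (Fin n) R) M₂]
    [IsScalarTower R (Matrix (Fin n) (Fin n) R) M₃]
    [Module.FinitePresentation (Matrix (Fin n) (Fin n) R) M₁]
    [Module.FinitePresentation (Matrix (Fin n) (Fin n) R) M₂]
    [Module.FinitePresentation (Matrix (Fin n) (Fin n) R) M₃]
    (ι : M₁ →ₗ[Matrix (Fin n) (Fin n) R] M₂)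
    (g : M₂ →ₗ[Matrix (Fin n) (Fin n) R] M₃)
    (hg : Function.Surjective g) (hexact : LinearMap.range ι = LinearMap.ker g) :
    fitIdeal R (eComponent n R M₁ ⟨0, hn⟩) * fitIdeal R (eComponent n R M₃ ⟨0, hn⟩) ≤
      fitIdeal R (eComponent n R M₂ ⟨0, hn⟩) := by
  set i : Fin n := ⟨0, hn⟩
  haveI : Module.FinitePresentation R M₂ := fp_restrict R (Matrix (Fin n) (Fin n) R) M₂
  haveI : Module.FinitePresentation R (eComponent n R M₂ i) := fp_eComponent n R M₂ i
  -- the induced maps on components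
  set f' := compMap n R i ι with hf'
  set g' := compMap n R i g with hg'
  have hg's : Function.Surjective g' := by
    rintro ⟨z, hz⟩
    obtain ⟨y, rfl⟩ := hz
    obtain ⟨w, hw⟩ := hg y
    refine ⟨⟨Matrix.single i i (1 : R) • w, ⟨w, rfl⟩⟩, ?_⟩
    apply Subtype.ext
    rw [hg', compMap_apply]
    show g (Matrix.single i i (1 : R) • w) = eMul n R M₃ i y
    rw [_root_.map_smul, hw]
    rfl
  have hex' : LinearMap.range f' = LinearMap.ker g' := by
    ext z
    constructor
    · rintro ⟨x, rfl⟩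
      have : (ι (x : M₁)) ∈ LinearMap.ker g := by
        rw [← hexact]; exact ⟨(x : M₁), rfl⟩
      apply Subtype.ext
      show (g' (f' x) : M₃) = 0
      rw [hg', compMap_apply, hf', compMap_apply]
      exact this
    · intro hz
      have hz0 : g (z : M₂) = 0 := by
        have := congrArg (Subtype.val) (LinearMap.mem_ker.mp hz)
        rwa [hg', compMap_apply] at this
      have : (z : M₂) ∈ LinearMap.range ι := by rw [hexact]; exact hz0
      obtain ⟨x, hx⟩ := this
      refine ⟨⟨Matrix.single i i (1 : R) • x, ⟨x, rfl⟩⟩, ?_⟩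
      apply Subtype.ext
      rw [hf', compMap_apply]
      show ι (Matrix.single i i (1 : R) • x) = (z : M₂)
      rw [_root_.map_smul, hx]
      exact smul_mem_eComponent n R M₂ i (z : M₂) z.2
  exact fit_mul_le f' g' hg's hex'
end

section
/- Let R be a commutative ring, n ≥ 1, and Λ = M_{n×n}(R). Every finitely generated two-sided ideal I of Λ is of the form I = M_{n×n}(J) for an ideal J of R, so that Λ/I ≅ M_{n×n}(R/J); moreover for such I one has Fit_Λ(Λ/I) = J^n. -/
open Matrix

open Pointwise

namespace FitAux

variable {R : Type*} [CommRing R]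

noncomputable def detIdeal (ι : Type*) [Fintype ι] [DecidableEq ι]
    (K : Submodule R (ι → R)) : Ideal R :=
  Ideal.span {x : R | ∃ V : Matrix ι ι R, (∀ i, V i ∈ K) ∧ x = V.det}

lemma det_mem_detIdeal {ι : Type*} [Fintype ι] [DecidableEq ι] {K : Submodule R (ι → R)}
    (V : Matrix ι ι R) (h : ∀ i, V i ∈ K) : V.det ∈ detIdeal ι K :=
  Ideal.subset_span ⟨V, h, rfl⟩

lemma detIdeal_comap_le {ι ι' : Type*} [Fintype ι] [DecidableEq ι] [Fintype ι'] [DecidableEq ι']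
    (e : ι ≃ ι') (K : Submodule R (ι → R)) :
    detIdeal ι' (K.comap (LinearMap.funLeft R R ⇑e)) ≤ detIdeal ι K := by
  rw [detIdeal, Ideal.span_le]
  rintro x ⟨V, hV, rfl⟩
  have hdet : V.det = (V.submatrix ⇑e ⇑e).det := (Matrix.det_submatrix_equiv_self e V).symm
  rw [hdet]
  exact det_mem_detIdeal _ fun i => hV (e i)

lemma detIdeal_comap {ι ι' : Type*} [Fintype ι] [DecidableEq ι] [Fintype ι'] [DecidableEq ι']
    (e : ι ≃ ι') (K : Submodule R (ι → R)) :
    detIdeal ι' (K.comap (LinearMap.funLeft R R ⇑e)) = detIdeal ι K := by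
  refine le_antisymm (detIdeal_comap_le e K) ?_
  have hK : K = (K.comap (LinearMap.funLeft R R ⇑e)).comap (LinearMap.funLeft R R ⇑e.symm) := by
    ext v
    simp only [Submodule.mem_comap, LinearMap.funLeft_apply]
    constructor
    · intro hv
      convert hv using 2
      funext i
      simp
    · intro hv
      convert hv using 2
      funext i
      simp
  conv_lhs => rw [hK]
  exact detIdeal_comap_le e.symm _

lemma minorsIdeal_eq_detIdeal {a b : ℕ} (H : Matrix (Fin a) (Fin b) R) :
    minorsIdeal R H = detIdeal (Fin b) (LinearMap.range H.vecMulLinear) := by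
  rw [range_vecMulLinear]
  apply le_antisymm
  · rw [minorsIdeal, Ideal.span_le]
    rintro x ⟨f, rfl⟩
    refine det_mem_detIdeal _ fun i => ?_
    have : (H.submatrix f id) i = H (f i) := rfl
    rw [this]
    exact Submodule.subset_span ⟨f i, rfl⟩
  · rw [detIdeal, Ideal.span_le]
    rintro x ⟨V, hV, rfl⟩
    choose cc hcc using fun i => (Submodule.mem_span_range_iff_exists_fun R).1 (hV i)
    have hVe : V = fun i => ∑ t : Fin a, cc i t • H t := by
      funext i; exact (hcc i).symm
    have hdet : V.det = (Matrix.detRowAlternating :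
        (Fin b → R) [⋀^Fin b]→ₗ[R] R).toMultilinearMap
        (fun i => ∑ t ∈ (Finset.univ : Finset (Fin a)), cc i t • H t) := by
      conv_lhs => rw [hVe]
      rfl
    rw [hdet, MultilinearMap.map_sum_finset]
    refine Ideal.sum_mem _ fun r _ => ?_
    rw [MultilinearMap.map_smul_univ]
    refine Ideal.mul_mem_left _ _ ?_
    have : (Matrix.detRowAlternating :
        (Fin b → R) [⋀^Fin b]→ₗ[R] R).toMultilinearMap (fun i => H (r i))
        = (H.submatrix r id).det := rfl
    rw [this]
    exact Ideal.subset_span ⟨r, rfl⟩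

lemma detIdeal_ker_cons {b : ℕ} {M : Type*} [AddCommGroup M] [Module R M]
    (π : (Fin b → R) →ₗ[R] M) (c : Fin b → R)
    (π₁ : (Fin (b+1) → R) →ₗ[R] M)
    (hπ₁ : ∀ v, π₁ v = v 0 • π c + π (Fin.tail v)) :
    detIdeal (Fin (b+1)) (LinearMap.ker π₁) = detIdeal (Fin b) (LinearMap.ker π) := by
  have hmem : ∀ v : Fin (b+1) → R, v ∈ LinearMap.ker π₁ ↔
      Fin.tail v + v 0 • c ∈ LinearMap.ker π := by
    intro v
    have h2 : π₁ v = π (Fin.tail v + v 0 • c) := by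
      rw [hπ₁, map_add, LinearMap.map_smul, add_comm]
    simp only [LinearMap.mem_ker, h2]
  apply le_antisymm
  · -- hard direction
    rw [detIdeal, Ideal.span_le]
    rintro x ⟨W, hW, rfl⟩
    set ρ : Fin (b+1) → R := Fin.cons 1 (fun j => -(c j)) with hρ
    set α : Fin (b+1) → R := fun i => W i 0 with hα
    set u : Fin (b+1) → Fin (b+1) → R := fun i => W i - α i • ρ with hu
    have hu0 : ∀ i, u i 0 = 0 := by
      intro i
      simp [hu, hα, hρ, Fin.cons_zero]
    have hut : ∀ i, Fin.tail (u i) ∈ LinearMap.ker π := by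
      intro i
      have : Fin.tail (u i) = Fin.tail (W i) + (W i 0) • c := by
        funext j
        simp [hu, hα, hρ, Fin.tail, Fin.cons_succ, sub_eq_add_neg]
      rw [this]
      exact (hmem (W i)).1 (hW i)
    have hWe : W = (fun i => α i • ρ) + u := by
      funext i j
      simp [hu]
    have hdet : W.det = (Matrix.detRowAlternating :
        (Fin (b+1) → R) [⋀^Fin (b+1)]→ₗ[R] R).toMultilinearMap ((fun i => α i • ρ) + u) := by
      conv_lhs => rw [hWe]
      rfl
    rw [hdet, MultilinearMap.map_add_univ]
    refine Ideal.sum_mem _ fun s _ => ?_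
    set base : Fin (b+1) → Fin (b+1) → R := s.piecewise (fun _ => ρ) u with hbase
    have hpw2 : s.piecewise (fun i => α i • ρ) u = s.piecewise (fun i => α i • base i) base := by
      funext i
      by_cases h : i ∈ s
      · simp [Finset.piecewise_eq_of_mem _ _ _ h, hbase]
      · simp [Finset.piecewise_eq_of_notMem _ _ _ h, hbase]
    rw [hpw2, MultilinearMap.map_piecewise_smul]
    refine Ideal.mul_mem_left _ _ ?_
    have hz : (Matrix.detRowAlternating :
        (Fin (b+1) → R) [⋀^Fin (b+1)]→ₗ[R] R).toMultilinearMap base = Matrix.det base := rfl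
    rcases Finset.eq_empty_or_nonempty s with hs | hs
    · -- base = u, column 0 is zero
      have hbu : base = u := by
        funext i j
        simp [hbase, hs]
      rw [hz, hbu, Matrix.det_eq_zero_of_column_eq_zero 0 hu0]
      exact Submodule.zero_mem _
    · by_cases hcard : s.card = 1
      · obtain ⟨i0, hi0⟩ := Finset.card_eq_one.1 hcard
        have hbup : base = Function.update u i0 ρ := by
          rw [hbase, hi0, Finset.piecewise_singleton]
        have hb0 : ∀ i, i ≠ i0 → base i 0 = 0 := by
          intro i hi
          rw [hbup, Function.update_of_ne hi]
          exact hu0 i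
        rw [hz, Matrix.det_succ_column_zero (A := base)]
        refine Ideal.sum_mem _ fun i _ => ?_
        by_cases hi : i = i0
        · subst hi
          refine Ideal.mul_mem_left _ _ ?_
          refine det_mem_detIdeal _ fun r => ?_
          have hr : Matrix.submatrix base i.succAbove Fin.succ r = Fin.tail (u (i.succAbove r)) := by
            funext j
            have hne : i.succAbove r ≠ i := Fin.succAbove_ne i r
            show base (i.succAbove r) j.succ = _
            rw [hbup, Function.update_of_ne hne]
            rfl
          rw [hr]
          exact hut _
        · rw [hb0 i hi]
          ring_nf
          simp
      · -- two distinct elements of s, both rows equal ρ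
        obtain ⟨i, hi, j, hj, hij⟩ := Finset.one_lt_card.1
          (lt_of_le_of_ne (Finset.Nonempty.card_pos hs) (Ne.symm hcard))
        have : Matrix.detRowAlternating base = 0 := by
          refine AlternatingMap.map_eq_zero_of_eq _ _ ?_ hij
          rw [hbase]
          rw [Finset.piecewise_eq_of_mem _ _ _ hi, Finset.piecewise_eq_of_mem _ _ _ hj]
        rw [hz]
        rw [show Matrix.det base = Matrix.detRowAlternating base from rfl, this]
        exact Submodule.zero_mem _
  · -- easy direction
    rw [detIdeal, Ideal.span_le]
    rintro x ⟨V, hV, rfl⟩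
    set V₁ : Matrix (Fin (b+1)) (Fin (b+1)) R :=
      Fin.cons (Fin.cons 1 (fun j => -(c j))) (fun i => Fin.cons 0 (V i)) with hV₁
    have hdet : V₁.det = V.det := by
      rw [Matrix.det_succ_column_zero, Fin.sum_univ_succ]
      have h00 : V₁ 0 0 = 1 := by simp [hV₁]
      have hs0 : ∀ i : Fin b, V₁ i.succ 0 = 0 := by
        intro i; simp [hV₁]
      have hsub : V₁.submatrix Fin.succ Fin.succ = V := by
        funext i j
        rw [Matrix.submatrix_apply]
        simp [hV₁]
      simp [h00, hs0, hsub]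
    rw [← hdet]
    refine det_mem_detIdeal _ fun i => ?_
    refine Fin.cases ?_ (fun i => ?_) i
    · rw [hmem]
      have h1 : Fin.tail (V₁ 0) = fun j => -(c j) := by
        simp [hV₁]
      have h2 : V₁ 0 0 = 1 := by simp [hV₁]
      rw [h1, h2]
      have : (fun j => -(c j)) + (1:R) • c = 0 := by
        funext j; simp
      rw [this]
      exact Submodule.zero_mem _
    · rw [hmem]
      have h1 : Fin.tail (V₁ i.succ) = V i := by
        simp [hV₁]
      have h2 : V₁ i.succ 0 = 0 := by simp [hV₁]
      rw [h1, h2, zero_smul, add_zero]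
      exact hV i

lemma detIdeal_ker_snoc {b : ℕ} {M : Type*} [AddCommGroup M] [Module R M]
    (π : (Fin b → R) →ₗ[R] M) (c : Fin b → R)
    (π₂ : (Fin (b+1) → R) →ₗ[R] M)
    (hπ₂ : ∀ v, π₂ v = v (Fin.last b) • π c + π (v ∘ Fin.castSucc)) :
    detIdeal (Fin (b+1)) (LinearMap.ker π₂) = detIdeal (Fin b) (LinearMap.ker π) := by
  set σ : Fin (b+1) ≃ Fin (b+1) := finRotate (b+1) with hσ
  set π₁ : (Fin (b+1) → R) →ₗ[R] M := π₂ ∘ₗ LinearMap.funLeft R R ⇑σ with hπ₁def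
  have h1 : ∀ v, π₁ v = v 0 • π c + π (Fin.tail v) := by
    intro v
    have e1 : (v ∘ ⇑σ) (Fin.last b) = v 0 := by
      simp [hσ, finRotate_last]
    have e2 : (v ∘ ⇑σ) ∘ Fin.castSucc = Fin.tail v := by
      funext i
      simp only [Function.comp_apply, hσ, finRotate_succ_apply, Fin.tail]
      congr 1
      exact Fin.coeSucc_eq_succ
    have hv : π₁ v = π₂ (v ∘ ⇑σ) := rfl
    rw [hv, hπ₂ (v ∘ ⇑σ), e1, e2]
  have h2 := detIdeal_ker_cons π c π₁ h1
  rw [← h2]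
  have hker : LinearMap.ker π₁ = (LinearMap.ker π₂).comap (LinearMap.funLeft R R ⇑σ) := by
    rw [hπ₁def, LinearMap.ker_comp]
  rw [hker]
  exact (detIdeal_comap σ (LinearMap.ker π₂)).symm ▸ rfl

/-- extension by zero at the last coordinate, as a linear map -/
def snoc0 (b : ℕ) : (Fin b → R) →ₗ[R] (Fin (b+1) → R) where
  toFun w := Fin.snoc w 0
  map_add' w w' := by
    funext i
    refine Fin.lastCases ?_ (fun j => ?_) i
    · simp [Fin.snoc_last]
    · simp [Fin.snoc_castSucc]
  map_smul' r w := by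
    funext i
    refine Fin.lastCases ?_ (fun j => ?_) i
    · simp [Fin.snoc_last]
    · simp [Fin.snoc_castSucc]

/-- combination of two maps -/
noncomputable def comb {b b' : ℕ} {M : Type*} [AddCommGroup M] [Module R M]
    (π : (Fin b → R) →ₗ[R] M) (π' : (Fin b' → R) →ₗ[R] M) :
    (Fin (b + b') → R) →ₗ[R] M :=
  π ∘ₗ LinearMap.funLeft R R (Fin.castAdd b') + π' ∘ₗ LinearMap.funLeft R R (Fin.natAdd b)

lemma comb_apply {b b' : ℕ} {M : Type*} [AddCommGroup M] [Module R M]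
    (π : (Fin b → R) →ₗ[R] M) (π' : (Fin b' → R) →ₗ[R] M) (v : Fin (b + b') → R) :
    comb π π' v = π (v ∘ Fin.castAdd b') + π' (v ∘ Fin.natAdd b) := rfl

lemma detIdeal_ker_comb {b : ℕ} {M : Type*} [AddCommGroup M] [Module R M]
    (π : (Fin b → R) →ₗ[R] M) (hπ : Function.Surjective π) :
    ∀ (b' : ℕ) (π' : (Fin b' → R) →ₗ[R] M),
      detIdeal (Fin (b + b')) (LinearMap.ker (comb π π'))
        = detIdeal (Fin b) (LinearMap.ker π) := by
  intro b'
  induction b' with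
  | zero =>
    intro π'
    set e : Fin b ≃ Fin (b + 0) := finCongr (Nat.add_zero b).symm with he
    have hc : comb π π' = π ∘ₗ LinearMap.funLeft R R ⇑e := by
      apply LinearMap.ext
      intro v
      have hz : π' (v ∘ Fin.natAdd b) = 0 := by
        rw [Subsingleton.elim (v ∘ Fin.natAdd b) 0, map_zero]
      rw [comb_apply, hz, add_zero]
      rfl
    rw [hc, LinearMap.ker_comp]
    exact detIdeal_comap e (LinearMap.ker π)
  | succ b' ih =>
    intro π'
    set τ : (Fin b' → R) →ₗ[R] M := π' ∘ₗ snoc0 b' with hτ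
    obtain ⟨c₀, hc₀⟩ := hπ (π' (Pi.single (Fin.last b') 1))
    set c : Fin (b + b') → R := Fin.append c₀ 0 with hc
    have hbc : comb π τ c = π' (Pi.single (Fin.last b') 1) := by
      rw [comb_apply]
      have h1 : c ∘ Fin.castAdd b' = c₀ := by
        funext i; simp [hc, Fin.append_left]
      have h2 : c ∘ Fin.natAdd b = 0 := by
        funext i; simp [hc, Fin.append_right]
      rw [h1, h2, map_zero, add_zero, hc₀]
    have key : ∀ v : Fin ((b + b') + 1) → R,
        comb π π' v = v (Fin.last (b + b')) • comb π τ c + comb π τ (v ∘ Fin.castSucc) := by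
      intro v
      rw [hbc, comb_apply, comb_apply]
      have id1 : v ∘ Fin.castAdd (b' + 1) = (v ∘ Fin.castSucc) ∘ Fin.castAdd b' := by
        funext i
        exact congrArg v (Fin.ext rfl)
      have id2 : π' (v ∘ Fin.natAdd b) =
          v (Fin.last (b + b')) • π' (Pi.single (Fin.last b') 1)
            + τ ((v ∘ Fin.castSucc) ∘ Fin.natAdd b) := by
        have hτa : τ ((v ∘ Fin.castSucc) ∘ Fin.natAdd b)
            = π' (Fin.snoc ((v ∘ Fin.castSucc) ∘ Fin.natAdd b) 0) := rfl
        rw [hτa, ← LinearMap.map_smul, ← map_add]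
        congr 1
        funext j
        refine Fin.lastCases ?_ (fun j' => ?_) j
        · have : (v ∘ Fin.natAdd b) (Fin.last b') = v (Fin.last (b + b')) :=
            congrArg v (Fin.ext (by simp))
          simp [this, Fin.snoc_last]
        · have hne : Fin.castSucc j' ≠ Fin.last b' := Fin.ne_of_lt (Fin.castSucc_lt_last j')
          have hval : (v ∘ Fin.natAdd b) (Fin.castSucc j') =
              v (Fin.castSucc (Fin.natAdd b j')) := congrArg v (Fin.ext rfl)
          simp only [Pi.add_apply, Pi.smul_apply, Pi.single_eq_of_ne hne, Fin.snoc_castSucc,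
            Function.comp_apply, smul_eq_mul, mul_zero, zero_add]
          exact congrArg v (Fin.ext rfl)
      rw [id1, id2]

      abel
    have h1 : detIdeal (Fin (b + b' + 1)) (LinearMap.ker (@comb _ _ b (b' + 1) _ _ _ π π'))
        = detIdeal (Fin (b + b')) (LinearMap.ker (comb π τ)) :=
      detIdeal_ker_snoc _ c _ key
    exact h1.trans (ih τ)

lemma detIdeal_ker_eq {M : Type*} [AddCommGroup M] [Module R M] {b b' : ℕ}
    (π : (Fin b → R) →ₗ[R] M) (π' : (Fin b' → R) →ₗ[R] M)
    (hπ : Function.Surjective π) (hπ' : Function.Surjective π') :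
    detIdeal (Fin b) (LinearMap.ker π) = detIdeal (Fin b') (LinearMap.ker π') := by
  rw [← detIdeal_ker_comb π hπ b' π', ← detIdeal_ker_comb π' hπ' b π]
  set e : Fin (b + b') ≃ Fin (b' + b) :=
    finSumFinEquiv.symm.trans ((Equiv.sumComm (Fin b) (Fin b')).trans finSumFinEquiv) with he
  have hcomp : comb π' π = comb π π' ∘ₗ LinearMap.funLeft R R ⇑e := by
    apply LinearMap.ext
    intro v
    have hrhs : (comb π π' ∘ₗ LinearMap.funLeft R R ⇑e) v = comb π π' (v ∘ ⇑e) := rfl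
    rw [hrhs, comb_apply, comb_apply]
    have h1 : (v ∘ ⇑e) ∘ Fin.castAdd b' = v ∘ Fin.natAdd b' := by
      funext i
      simp [he]
    have h2 : (v ∘ ⇑e) ∘ Fin.natAdd b = v ∘ Fin.castAdd b := by
      funext i
      simp [he]
    rw [h1, h2, add_comm]
  rw [hcomp, LinearMap.ker_comp]
  exact (detIdeal_comap e (LinearMap.ker (comb π π'))).symm

lemma span_prod_eq_pow (J : Ideal R) :
    ∀ k : ℕ, Ideal.span {x : R | ∃ g : Fin k → R, (∀ i, g i ∈ J) ∧ x = ∏ i, g i} = J ^ k := by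
  intro k
  induction k with
  | zero =>
    have hset : {x : R | ∃ g : Fin 0 → R, (∀ i, g i ∈ J) ∧ x = ∏ i, g i} = {1} := by
      ext x
      constructor
      · rintro ⟨g, _, rfl⟩
        simp
      · rintro rfl
        exact ⟨Fin.elim0, fun i => i.elim0, by simp⟩
    rw [hset, Ideal.span_singleton_one, pow_zero, Ideal.one_eq_top]
  | succ k ih =>
    have hstep : Ideal.span {x : R | ∃ g : Fin (k+1) → R, (∀ i, g i ∈ J) ∧ x = ∏ i, g i}
        = Ideal.span ({x : R | ∃ g : Fin k → R, (∀ i, g i ∈ J) ∧ x = ∏ i, g i} * (J : Set R)) := by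
      apply le_antisymm <;> rw [Ideal.span_le]
      · rintro x ⟨g, hg, rfl⟩
        apply Ideal.subset_span
        rw [Fin.prod_univ_castSucc]
        exact Set.mul_mem_mul ⟨fun i => g (Fin.castSucc i), fun i => hg _, rfl⟩ (hg (Fin.last k))
      · rintro x hx
        apply Ideal.subset_span
        obtain ⟨p, ⟨g, hg, rfl⟩, a, ha, rfl⟩ := hx
        exact ⟨Fin.snoc g a, fun i => Fin.lastCases (by simpa [Fin.snoc_last]) (fun j => by simpa [Fin.snoc_castSucc] using hg j) i, by rw [Fin.prod_univ_castSucc]; simp [Fin.snoc_last, Fin.snoc_castSucc]⟩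
    rw [hstep, ← Ideal.span_mul_span', ih, Ideal.span_eq, pow_succ]

lemma detIdeal_pi (J : Ideal R) (n : ℕ) :
    detIdeal (Fin n) (Submodule.pi Set.univ (fun _ : Fin n => (J : Submodule R R))) = J ^ n := by
  rw [← span_prod_eq_pow J n]
  apply le_antisymm <;> rw [detIdeal, Ideal.span_le] <;> rintro x hx
  · obtain ⟨V, hV, rfl⟩ := hx
    rw [Matrix.det_apply]
    refine Ideal.sum_mem _ fun σ _ => ?_
    refine Submodule.smul_of_tower_mem _ _ ?_
    exact Ideal.subset_span ⟨fun i => V (σ i) i, fun i => Submodule.mem_pi.1 (hV (σ i)) i trivial, rfl⟩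
  · obtain ⟨g, hg, rfl⟩ := hx
    rw [← Matrix.det_diagonal]
    apply Ideal.subset_span
    refine ⟨Matrix.diagonal g, fun i => Submodule.mem_pi.2 fun j _ => ?_, rfl⟩
    rcases eq_or_ne i j with h | h
    · subst h
      simpa [Matrix.diagonal_apply_eq] using hg i
    · simp [Matrix.diagonal_apply_ne _ h]

end FitAux

/-- Every finitely generated two-sided ideal `I` of `Λ = M_{n×n}(R)` is of the form
`I = M_{n×n}(J)` for an ideal `J` of `R` (i.e. `x ∈ I` iff all entries of `x` lie in `J`),
and for such `I` one has `Fit_Λ(Λ/I) = J^n`. -/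
theorem fitIdeal_quotient_twoSidedIdeal (n : ℕ) (hn : 0 < n) (R : Type*) [CommRing R]
    (I : Ideal (Matrix (Fin n) (Fin n) R)) (hfg : I.FG)
    (htwosided : ∀ x ∈ I, ∀ y : Matrix (Fin n) (Fin n) R, x * y ∈ I) :
    ∃ J : Ideal R,
      (∀ x : Matrix (Fin n) (Fin n) R, x ∈ I ↔ ∀ i j : Fin n, x i j ∈ J) ∧
      fitIdeal R (eComponent n R (Matrix (Fin n) (Fin n) R ⧸ I) ⟨0, hn⟩) = J ^ n := by
  classical
  obtain ⟨s, hs⟩ := hfg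
  set z : Fin n := ⟨0, hn⟩ with hz
  set t : Finset R :=
    s.biUnion (fun m => Finset.image (fun p : Fin n × Fin n => m p.1 p.2) Finset.univ) with ht
  set J : Ideal R := Ideal.span ↑t with hJ
  have htJ : ∀ m ∈ s, ∀ i j : Fin n, m i j ∈ J := by
    intro m hm i j
    refine Ideal.subset_span ?_
    exact Finset.mem_coe.2 (Finset.mem_biUnion.2
      ⟨m, hm, Finset.mem_image.2 ⟨(i, j), Finset.mem_univ _, rfl⟩⟩)
  -- the key correspondence I = M_n(J)
  have hIJ : ∀ x : Matrix (Fin n) (Fin n) R, x ∈ I ↔ ∀ i j : Fin n, x i j ∈ J := by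
    intro x
    constructor
    · intro hx
      rw [← hs] at hx
      induction hx using Submodule.span_induction with
      | mem m hm => exact fun i j => htJ m hm i j
      | zero => intro i j; simp
      | add a b _ _ ha hb =>
        intro i j
        simpa [Matrix.add_apply] using J.add_mem (ha i j) (hb i j)
      | smul c a _ h =>
        intro i j
        rw [smul_eq_mul, Matrix.mul_apply]
        exact Ideal.sum_mem _ fun k _ => Ideal.mul_mem_left _ _ (h k j)
    · intro hx
      have hstd : ∀ r ∈ J, ∀ i j : Fin n, Matrix.single i j r ∈ I := by
        intro r hr
        induction hr using Submodule.span_induction with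
        | mem r hrt =>
          intro i j
          obtain ⟨m, hm, hmem⟩ := Finset.mem_biUnion.1 (Finset.mem_coe.1 hrt)
          obtain ⟨p, _, hp⟩ := Finset.mem_image.1 hmem
          have hconj : Matrix.single i p.1 (1:R) *
              (m * Matrix.single p.2 j (1:R)) = Matrix.single i j r := by
            rw [← hp]
            ext i' j'
            by_cases hi : i' = i
            · subst hi
              rw [Matrix.single_mul_apply_same, one_mul]
              by_cases hj : j' = j
              · subst hj
                rw [Matrix.mul_single_apply_same, mul_one,
                  Matrix.single_apply_same]
              · rw [Matrix.mul_single_apply_of_ne _ _ _ _ _ hj,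
                  Matrix.single_apply_of_ne]
                intro hc
                exact hj hc.2.symm
            · rw [Matrix.single_mul_apply_of_ne _ _ _ _ _ hi,
                Matrix.single_apply_of_ne]
              intro hc
              exact hi hc.1.symm
          rw [← hconj]
          have h1 : m ∈ I := hs ▸ Submodule.subset_span hm
          have h2 : m * Matrix.single p.2 j (1:R) ∈ I := htwosided m h1 _
          exact Ideal.mul_mem_left I _ h2
        | zero =>
          intro i j
          simp only [Matrix.single_zero]
          exact I.zero_mem
        | add a b _ _ ha hb =>
          intro i j
          rw [Matrix.single_add]
          exact I.add_mem (ha i j) (hb i j)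
        | smul r a _ h =>
          intro i j
          rw [← Matrix.smul_single]
          have hsm : r • (Matrix.single i j a) =
              (r • (1 : Matrix (Fin n) (Fin n) R)) * Matrix.single i j a := by
            rw [smul_mul_assoc, one_mul]
          rw [hsm]
          exact Ideal.mul_mem_left I _ (h i j)
      rw [Matrix.matrix_eq_sum_single x]
      exact Ideal.sum_mem _ fun i _ => Ideal.sum_mem _ fun j _ => hstd _ (hx i j) i j
  -- set up the presentation of e₁₁(Λ/I)
  set Q := Matrix (Fin n) (Fin n) R ⧸ I with hQ
  set E : Matrix (Fin n) (Fin n) R := Matrix.single z z (1:R) with hE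
  let Arow : (Fin n → R) →ₗ[R] Matrix (Fin n) (Fin n) R :=
    { toFun := fun v => Matrix.of fun i j => if i = z then v j else 0
      map_add' := fun v w => by
        ext i j
        by_cases h : i = z <;> simp [h]
      map_smul' := fun r v => by
        ext i j
        by_cases h : i = z <;> simp [h] }
  have hArow : ∀ (v : Fin n → R) (i j : Fin n), Arow v i j = if i = z then v j else 0 :=
    fun v i j => rfl
  let mkR : Matrix (Fin n) (Fin n) R →ₗ[R] Q :=
    { toFun := Submodule.Quotient.mk
      map_add' := fun x y => by rw [Submodule.Quotient.mk_add]
      map_smul' := fun r x => by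
        show Submodule.Quotient.mk (r • x) = r • Submodule.Quotient.mk x
        exact Submodule.Quotient.mk_smul I r x }
  have hEq : ∀ a : Matrix (Fin n) (Fin n) R,
      eMul n R Q z (Submodule.Quotient.mk a) = Submodule.Quotient.mk (E * a) := by
    intro a
    show Matrix.single z z (1:R) • (Submodule.Quotient.mk a : Q)
      = Submodule.Quotient.mk (E * a)
    rw [← Submodule.Quotient.mk_smul, smul_eq_mul, hE]
  have hEA : ∀ v : Fin n → R, E * Arow v = Arow v := by
    intro v
    ext i j
    by_cases h : i = z
    · subst h
      rw [hE, Matrix.single_mul_apply_same, one_mul]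
    · rw [hE, Matrix.single_mul_apply_of_ne _ _ _ _ _ h, hArow, if_neg h]
  have hmemA : ∀ v : Fin n → R, (mkR ∘ₗ Arow) v ∈ eComponent n R Q z := by
    intro v
    exact ⟨Submodule.Quotient.mk (Arow v), by rw [hEq, hEA]; rfl⟩
  set π₀ : (Fin n → R) →ₗ[R] ↥(eComponent n R Q z) :=
    LinearMap.codRestrict (eComponent n R Q z) (mkR ∘ₗ Arow) hmemA with hπ₀
  have hπ₀val : ∀ v : Fin n → R, (π₀ v : Q) = Submodule.Quotient.mk (Arow v) := by
    intro v
    rw [hπ₀, LinearMap.codRestrict_apply]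
    rfl
  have hsurj : Function.Surjective π₀ := by
    rintro ⟨y, hy⟩
    obtain ⟨x, hx⟩ := hy
    obtain ⟨a, rfl⟩ := Submodule.Quotient.mk_surjective I x
    refine ⟨fun j => a z j, Subtype.ext ?_⟩
    refine (hπ₀val _).trans ?_
    show Submodule.Quotient.mk (Arow fun j => a z j) = y
    rw [← hx, hEq]
    have : Arow (fun j => a z j) = E * a := by
      ext i j
      by_cases h : i = z
      · subst h
        rw [hArow, if_pos rfl, hE, Matrix.single_mul_apply_same, one_mul]
      · rw [hArow, if_neg h, hE, Matrix.single_mul_apply_of_ne _ _ _ _ _ h]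
    rw [this]
  have hker : LinearMap.ker π₀
      = Submodule.pi Set.univ (fun _ : Fin n => (J : Submodule R R)) := by
    ext v
    rw [LinearMap.mem_ker, Submodule.mem_pi]
    constructor
    · intro h j _
      have h0 : (π₀ v : Q) = 0 := by rw [h]; rfl
      rw [hπ₀val] at h0
      have hmem := (Submodule.Quotient.mk_eq_zero I).1 h0
      have h2 := (hIJ (Arow v)).1 hmem z j
      rw [hArow, if_pos rfl] at h2
      exact h2
    · intro h
      apply Subtype.ext
      rw [hπ₀val]
      show Submodule.Quotient.mk (Arow v) = (0 : Q)
      rw [Submodule.Quotient.mk_eq_zero]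
      rw [hIJ]
      intro i j
      rw [hArow]
      by_cases hi : i = z
      · rw [if_pos hi]
        exact h j trivial
      · rw [if_neg hi]
        exact J.zero_mem
  have hfgK : (Submodule.pi Set.univ (fun _ : Fin n => (J : Submodule R R))).FG :=
    Submodule.fg_pi (fun _ => ⟨t, hJ.symm⟩)
  obtain ⟨a₀, w, hw⟩ := Submodule.fg_iff_exists_fin_generating_family.1 hfgK
  set H₀ : Matrix (Fin a₀) (Fin n) R := Matrix.of w with hH₀
  have hrange : LinearMap.range H₀.vecMulLinear
      = Submodule.pi Set.univ (fun _ : Fin n => (J : Submodule R R)) := by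
    rw [range_vecMulLinear]
    exact hw
  have hpres : IsPresentation R H₀ (↥(eComponent n R Q z)) π₀ :=
    ⟨hsurj, by rw [hker, hrange]⟩
  refine ⟨J, hIJ, ?_⟩
  have hval : ∀ (a b : ℕ) (H : Matrix (Fin a) (Fin b) R)
      (π : (Fin b → R) →ₗ[R] ↥(eComponent n R Q z)),
      IsPresentation R H (↥(eComponent n R Q z)) π → minorsIdeal R H = J ^ n := by
    rintro a b H π ⟨h1, h2⟩
    rw [FitAux.minorsIdeal_eq_detIdeal, ← h2,
      FitAux.detIdeal_ker_eq π π₀ h1 hsurj, hker, FitAux.detIdeal_pi]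
  rw [fitIdeal]
  apply le_antisymm
  · refine iSup_le fun a => iSup_le fun b => iSup_le fun H => iSup_le fun π =>
      iSup_le fun hp => ?_
    exact (hval a b H π hp).le
  · rw [← hval a₀ n H₀ π₀ hpres]
    refine le_iSup_of_le a₀ ?_
    refine le_iSup_of_le n ?_
    refine le_iSup_of_le H₀ ?_
    refine le_iSup_of_le π₀ ?_
    exact le_iSup_of_le hpres le_rfl
end

section
/- Let R be a commutative ring, n ≥ 1, Λ = M_{n×n}(R), and let I be a finitely generated left ideal of Λ. Then Fit_Λ(Λ/I) = ⟨det(x) : x ∈ I⟩_R, the R-ideal generated by the determinants (computed in M_{n×n}(R)) of all elements of I. -/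
open Matrix

section AuxDets
open LinearMap
variable {R : Type*} [CommRing R]

variable {R : Type*} [CommRing R]

noncomputable def dets {ι : Type*} [Fintype ι] [DecidableEq ι] (K : Submodule R (ι → R)) :
    Ideal R :=
  Ideal.span {r : R | ∃ S : Matrix ι ι R, (∀ i, S i ∈ K) ∧ r = S.det}

lemma det_mem_dets {ι : Type*} [Fintype ι] [DecidableEq ι] {K : Submodule R (ι → R)}
    {S : Matrix ι ι R} (h : ∀ i, S i ∈ K) : S.det ∈ dets K :=
  Ideal.subset_span ⟨S, h, rfl⟩

lemma det_mem_span_dets {ι : Type*} [Fintype ι] [DecidableEq ι] (T : Set (ι → R))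
    (S : Matrix ι ι R) (h : ∀ i, S i ∈ Submodule.span R T) :
    S.det ∈ Ideal.span {r : R | ∃ S' : Matrix ι ι R, (∀ i, S' i ∈ T) ∧ r = S'.det} := by
  classical
  set J := Ideal.span {r : R | ∃ S' : Matrix ι ι R, (∀ i, S' i ∈ T) ∧ r = S'.det} with hJ
  suffices H : ∀ s : Finset ι, ∀ S : Matrix ι ι R, (∀ i, S i ∈ Submodule.span R T) →
      (∀ i ∉ s, S i ∈ T) → S.det ∈ J by
    exact H Finset.univ S h (fun i hi => absurd (Finset.mem_univ i) hi)
  intro s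
  induction s using Finset.induction_on with
  | empty => exact fun S hspan hT => Ideal.subset_span ⟨S, fun i => hT i (by simp), rfl⟩
  | @insert a s ha ih =>
    intro S hspan hT
    have key : ∀ (v : ι → R) (hv : v ∈ Submodule.span R T), (S.updateRow a v).det ∈ J := by
      intro v hv
      induction hv using Submodule.span_induction with
      | mem x hx =>
        refine ih (S.updateRow a x) (fun i => ?_) (fun i hi => ?_)
        · by_cases hia : i = a
          · subst hia; rw [Matrix.updateRow_self]; exact Submodule.subset_span hx
          · rw [Matrix.updateRow_ne hia]; exact hspan i
        · by_cases hia : i = a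
          · subst hia; rwa [Matrix.updateRow_self]
          · rw [Matrix.updateRow_ne hia]
            exact hT i (by simp [hia, hi])
      | zero =>
        rw [show ((0 : ι → R) = fun _ => (0:R)) from rfl]
        have : (S.updateRow a fun _ => (0:R)).det = 0 :=
          Matrix.det_eq_zero_of_row_eq_zero a (fun j => by simp)
        rw [this]; exact Ideal.zero_mem _
      | add x y hx hy ihx ihy =>
        rw [Matrix.det_updateRow_add]
        exact Ideal.add_mem _ ihx ihy
      | smul r x hx ihx =>
        rw [Matrix.det_updateRow_smul]
        exact Ideal.mul_mem_left _ _ ihx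
    have := key (S a) (hspan a)
    rwa [Matrix.updateRow_eq_self] at this

lemma dets_span {ι : Type*} [Fintype ι] [DecidableEq ι] (T : Set (ι → R)) :
    dets (Submodule.span R T) =
      Ideal.span {r : R | ∃ S : Matrix ι ι R, (∀ i, S i ∈ T) ∧ r = S.det} := by
  apply le_antisymm
  · rw [dets, Ideal.span_le]
    rintro r ⟨S, hS, rfl⟩
    exact det_mem_span_dets T S hS
  · rw [Ideal.span_le]
    rintro r ⟨S, hS, rfl⟩
    exact det_mem_dets (fun i => Submodule.subset_span (hS i))

lemma dets_congr {ι κ : Type*} [Fintype ι] [DecidableEq ι] [Fintype κ] [DecidableEq κ]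
    (e : ι ≃ κ) (K : Submodule R (ι → R)) (K' : Submodule R (κ → R))
    (h : ∀ w : κ → R, w ∈ K' ↔ (w ∘ e) ∈ K) : dets K' = dets K := by
  apply le_antisymm
  · rw [dets, Ideal.span_le]
    rintro r ⟨S, hS, rfl⟩
    rw [← Matrix.det_submatrix_equiv_self e S]
    exact det_mem_dets (fun i => by
      have := (h (S (e i))).mp (hS (e i))
      convert this using 1
      rfl)
  · rw [dets, Ideal.span_le]
    rintro r ⟨S, hS, rfl⟩
    rw [← Matrix.det_submatrix_equiv_self e.symm S]
    refine det_mem_dets (fun k => ?_)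
    rw [h]
    convert hS (e.symm k) using 1
    funext i
    simp [Matrix.submatrix_apply]
lemma dets_ker_extend {ι : Type*} [Fintype ι] [DecidableEq ι] {M : Type*} [AddCommGroup M]
    [Module R M] (π : (ι → R) →ₗ[R] M) (hπ : Function.Surjective π) (m : M)
    (π' : ((ι ⊕ Fin 1) → R) →ₗ[R] M)
    (h : ∀ v, π' v = π (v ∘ Sum.inl) + v (Sum.inr 0) • m) :
    dets (ker π') = dets (ker π) := by
  classical
  obtain ⟨c, hc⟩ := hπ m
  set d : ι ⊕ Fin 1 → R := Sum.elim (fun i => -c i) (fun _ => 1) with hd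
  apply le_antisymm
  · -- hard direction
    set T : Set (ι ⊕ Fin 1 → R) :=
      {w | (w ∘ Sum.inl) ∈ ker π ∧ w (Sum.inr 0) = 0} ∪ {d} with hT
    have hker_le : (ker π' : Set (ι ⊕ Fin 1 → R)) ⊆ ↑(Submodule.span R T) := by
      intro v hv
      have hv' : π' v = 0 := hv
      have hsplit : v = (v - v (Sum.inr 0) • d) + v (Sum.inr 0) • d := by abel
      have h1 : (v - v (Sum.inr 0) • d) ∈ T := by
        left
        constructor
        · show π _ = 0
          have heq : ((v - v (Sum.inr 0) • d) ∘ Sum.inl) = (v ∘ Sum.inl) + v (Sum.inr 0) • c := by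
            funext i
            simp only [Function.comp_apply, Pi.sub_apply, Pi.smul_apply, Pi.add_apply,
              smul_eq_mul, hd, Sum.elim_inl]
            ring
          have h2 := h v
          rw [hv'] at h2
          rw [heq, map_add, _root_.map_smul, hc]
          exact h2.symm
        · simp [hd]
      have h2 : d ∈ T := Or.inr rfl
      rw [hsplit]
      exact Submodule.add_mem _ (Submodule.subset_span h1)
        (Submodule.smul_mem _ _ (Submodule.subset_span h2))
    rw [dets, Ideal.span_le]
    rintro r ⟨S, hS, rfl⟩
    have hrows : ∀ i, S i ∈ Submodule.span R T := fun i => hker_le (hS i)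
    have hstep := det_mem_span_dets T S hrows
    refine Ideal.span_le.mpr ?_ hstep
    rintro r ⟨W, hW, rfl⟩
    -- now analyze W with rows in T
    by_cases hex : ∃ i₀, W i₀ = d
    · obtain ⟨i₀, hi₀⟩ := hex
      by_cases hdup : ∃ j, j ≠ i₀ ∧ W j = d
      · obtain ⟨j, hji, hj⟩ := hdup
        rw [Matrix.det_zero_of_row_eq hji (hj.trans hi₀.symm)]
        exact Ideal.zero_mem _
      · push_neg at hdup
        -- unique row equal to d
        set σ : Equiv.Perm (ι ⊕ Fin 1) := Equiv.swap i₀ (Sum.inr 0) with hσ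
        have htype1 : ∀ x, W x ≠ d → (W x ∘ Sum.inl) ∈ ker π ∧ W x (Sum.inr 0) = 0 := by
          intro x hx
          rcases hW x with h1 | h1
          · exact h1
          · exact absurd h1 hx
        have hW' : ∀ j : ι, (W (σ (Sum.inl j)) ∘ Sum.inl) ∈ ker π ∧
            W (σ (Sum.inl j)) (Sum.inr 0) = 0 := by
          intro j
          apply htype1
          intro hcon
          have h1 : σ (Sum.inl j) = i₀ := by
            by_contra hne
            exact hdup _ hne hcon
          have h2 : Sum.inl j = σ⁻¹ i₀ := by rw [← h1]; simp
          rw [hσ, Equiv.swap_inv, Equiv.swap_apply_left] at h2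
          exact Sum.inl_ne_inr h2
        have hWr : W (σ (Sum.inr 0)) = d := by
          rw [hσ, Equiv.swap_apply_right]; exact hi₀
        -- block structure
        set A : Matrix ι ι R := Matrix.of (fun i j => W (σ (Sum.inl i)) (Sum.inl j)) with hA
        have hblock : (W.submatrix σ _root_.id) =
            Matrix.fromBlocks A 0 (Matrix.of fun (_ : Fin 1) j => d (Sum.inl j))
              (Matrix.of fun (_ : Fin 1) (_ : Fin 1) => (1 : R)) := by
          ext (i | i) (j | j)
          · rfl
          · simp only [Matrix.submatrix_apply, id_eq, Matrix.fromBlocks_apply₁₂,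
              Matrix.zero_apply]
            rw [Fin.fin_one_eq_zero j]
            exact (hW' i).2
          · simp only [Matrix.submatrix_apply, id_eq, Matrix.fromBlocks_apply₂₁]
            rw [Fin.fin_one_eq_zero i, hWr]; rfl
          · simp only [Matrix.submatrix_apply, id_eq, Matrix.fromBlocks_apply₂₂]
            rw [Fin.fin_one_eq_zero i, Fin.fin_one_eq_zero j, hWr]
            simp [hd]
        have hdet' : (W.submatrix σ _root_.id).det = A.det := by
          rw [hblock, Matrix.det_fromBlocks_zero₁₂]
          simp
        have hmem : A.det ∈ dets (ker π) := det_mem_dets (fun i => (hW' i).1)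
        have hperm := Matrix.det_permute σ W
        rcases Int.units_eq_one_or (Equiv.Perm.sign σ) with hs | hs <;> rw [hs] at hperm <;>
          simp only [Units.val_one, Units.val_neg, Int.cast_one, Int.cast_neg, one_mul,
            neg_mul, neg_one_mul] at hperm
        · rw [← hperm, hdet'] at *; exact hmem
        · have h3 := congrArg Neg.neg hperm
          rw [neg_neg] at h3
          rw [← h3, hdet']
          exact neg_mem hmem
    · push_neg at hex
      have : W.det = 0 := by
        apply Matrix.det_eq_zero_of_column_eq_zero (Sum.inr 0)
        intro i
        rcases hW i with h1 | h1
        · exact h1.2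
        · exact absurd h1 (hex i)
      rw [this]; exact Ideal.zero_mem _
  · rw [dets, Ideal.span_le]
    rintro r ⟨S, hS, rfl⟩
    set W : Matrix (ι ⊕ Fin 1) (ι ⊕ Fin 1) R :=
      Matrix.fromBlocks S 0 (Matrix.of fun (_ : Fin 1) j => -c j)
        (Matrix.of fun (_ : Fin 1) (_ : Fin 1) => (1 : R)) with hWdef
    have hdet : W.det = S.det := by
      rw [hWdef, Matrix.det_fromBlocks_zero₁₂]; simp
    rw [← hdet]
    refine det_mem_dets (fun i => ?_)
    show π' _ = 0
    rcases i with i | i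
    · rw [h]
      have h1 : (W (Sum.inl i) ∘ Sum.inl) = S i := by funext j; rfl
      have h2 : W (Sum.inl i) (Sum.inr 0) = 0 := rfl
      rw [h1, h2, hS i, zero_smul, add_zero]
    · rw [h]
      have h1 : (W (Sum.inr i) ∘ Sum.inl) = fun j => -c j := by funext j; rfl
      have h2 : W (Sum.inr i) (Sum.inr 0) = 1 := rfl
      rw [h1, h2, one_smul]
      have h3 : (fun j => -c j) = -c := by funext j; rfl
      rw [h3, map_neg, hc, neg_add_cancel]

lemma dets_ker_sum {ι : Type*} [Fintype ι] [DecidableEq ι] {M : Type*} [AddCommGroup M]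
    [Module R M] (k : ℕ) (π : (ι → R) →ₗ[R] M) (hπ : Function.Surjective π)
    (q : (Fin k → R) →ₗ[R] M) (ρ : ((ι ⊕ Fin k) → R) →ₗ[R] M)
    (h : ∀ v, ρ v = π (v ∘ Sum.inl) + q (v ∘ Sum.inr)) :
    dets (ker ρ) = dets (ker π) := by
  induction k with
  | zero =>
    refine dets_congr (Equiv.sumEmpty ι (Fin 0)).symm (ker π) (ker ρ) (fun w => ?_)
    have h1 : (w ∘ (Equiv.sumEmpty ι (Fin 0)).symm) = w ∘ Sum.inl := by
      funext i; rfl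
    have h2 : ρ w = π (w ∘ Sum.inl) := by
      rw [h]
      have : (w ∘ Sum.inr : Fin 0 → R) = 0 := funext fun j => j.elim0
      rw [this, map_zero, add_zero]
    constructor
    · intro hw; rw [h1]; show π _ = 0; rw [← h2]; exact hw
    · intro hw; show ρ w = 0; rw [h2]; rw [h1] at hw; exact hw
  | succ k ih =>
    -- the extension-by-zero map
    set ext0 : (Fin k → R) →ₗ[R] (Fin (k+1) → R) :=
      Function.ExtendByZero.linearMap R Fin.castSucc with hext0
    have hext0_cast : ∀ (t : Fin k → R) (j : Fin k), ext0 t (Fin.castSucc j) = t j := by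
      intro t j
      simp [hext0, Fin.castSucc_injective k |>.extend_apply]
    have hext0_last : ∀ (t : Fin k → R), ext0 t (Fin.last k) = 0 := by
      intro t
      have : ¬ ∃ j : Fin k, Fin.castSucc j = Fin.last k := by
        rintro ⟨j, hj⟩
        exact absurd hj (Fin.castSucc_lt_last j).ne
      simp [hext0, Function.extend_apply' _ _ _ this]
    set π₁ : ((ι ⊕ Fin k) → R) →ₗ[R] M :=
      π.comp (LinearMap.funLeft R R Sum.inl) +
        (q.comp ext0).comp (LinearMap.funLeft R R (Sum.inr : Fin k → ι ⊕ Fin k)) with hπ₁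
    have hπ₁_apply : ∀ u, π₁ u = π (u ∘ Sum.inl) + q (ext0 (u ∘ Sum.inr)) := fun u => rfl
    have hπ₁_surj : Function.Surjective π₁ := by
      intro y
      obtain ⟨x, hx⟩ := hπ y
      refine ⟨Sum.elim x 0, ?_⟩
      rw [hπ₁_apply]
      have h1 : (Sum.elim x (0 : Fin k → R) ∘ Sum.inl) = x := rfl
      have h2 : (Sum.elim x (0 : Fin k → R) ∘ Sum.inr) = 0 := rfl
      rw [h1, h2, map_zero, map_zero, add_zero, hx]
    have hbase : dets (ker π₁) = dets (ker π) :=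
      ih (q.comp ext0) π₁ hπ₁_apply
    -- the equivalence
    set e : ((ι ⊕ Fin k) ⊕ Fin 1) ≃ (ι ⊕ Fin (k+1)) :=
      (Equiv.sumAssoc ι (Fin k) (Fin 1)).trans ((Equiv.refl ι).sumCongr finSumFinEquiv) with he
    set π'' : (((ι ⊕ Fin k) ⊕ Fin 1) → R) →ₗ[R] M :=
      ρ.comp (LinearMap.funLeft R R ⇑e.symm) with hπ''
    have hπ''_apply : ∀ w, π'' w = ρ (w ∘ ⇑e.symm) := fun w => rfl
    have key : ∀ w, π'' w = π₁ (w ∘ Sum.inl) + w (Sum.inr 0) • q (Pi.single (Fin.last k) (1:R)) := by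
      intro w
      rw [hπ''_apply, h, hπ₁_apply]
      have h1 : ((w ∘ ⇑e.symm) ∘ Sum.inl) = (w ∘ Sum.inl) ∘ Sum.inl := by
        funext i
        simp [he]
      have h2 : ((w ∘ ⇑e.symm) ∘ Sum.inr) =
          ext0 ((w ∘ Sum.inl) ∘ Sum.inr) + w (Sum.inr 0) • ((Pi.single (Fin.last k) (1:R)) : Fin (k+1) → R) := by
        funext j
        induction j using Fin.lastCases with
        | last =>
          have hlast : e.symm (Sum.inr (Fin.last k)) = Sum.inr 0 := by
            simp [he]
          simp only [Function.comp_apply, Pi.add_apply, Pi.smul_apply, smul_eq_mul]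
          rw [hlast, hext0_last, Pi.single_eq_same]
          ring
        | cast j =>
          have hcast : e.symm (Sum.inr (Fin.castSucc j)) = Sum.inl (Sum.inr j) := by
            have : Fin.castSucc j = Fin.castAdd 1 j := rfl
            simp [he, this]
          simp only [Function.comp_apply, Pi.add_apply, Pi.smul_apply, smul_eq_mul]
          rw [hcast, hext0_cast, Pi.single_eq_of_ne (Fin.castSucc_lt_last j).ne]
          ring_nf
          rfl
      rw [h1, h2, map_add, _root_.map_smul, add_assoc]
    have hC : dets (ker π'') = dets (ker π₁) :=
      dets_ker_extend π₁ hπ₁_surj (q (Pi.single (Fin.last k) (1:R))) π'' key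
    have hcongr : dets (ker ρ) = dets (ker π'') := by
      refine dets_congr e (ker π'') (ker ρ) (fun w => ?_)
      have : π'' (w ∘ ⇑e) = ρ w := by
        rw [hπ''_apply]
        have : (w ∘ ⇑e) ∘ ⇑e.symm = w := by
          funext x; simp
        rw [this]
      constructor
      · intro hw; show π'' _ = 0; rw [this]; exact hw
      · intro hw; show ρ w = 0; rw [← this]; exact hw
    rw [hcongr, hC, hbase]

lemma dets_ker_eq {b n : ℕ} {M : Type*} [AddCommGroup M] [Module R M]
    (π : (Fin b → R) →ₗ[R] M) (hπ : Function.Surjective π)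
    (q : (Fin n → R) →ₗ[R] M) (hq : Function.Surjective q) :
    dets (ker π) = dets (ker q) := by
  set ρ : ((Fin b ⊕ Fin n) → R) →ₗ[R] M :=
    π.comp (LinearMap.funLeft R R Sum.inl) + q.comp (LinearMap.funLeft R R Sum.inr) with hρ
  set ρ' : ((Fin n ⊕ Fin b) → R) →ₗ[R] M :=
    q.comp (LinearMap.funLeft R R Sum.inl) + π.comp (LinearMap.funLeft R R Sum.inr) with hρ'
  have h1 : dets (ker ρ) = dets (ker π) := dets_ker_sum n π hπ q ρ (fun v => rfl)
  have h2 : dets (ker ρ') = dets (ker q) := dets_ker_sum b q hq π ρ' (fun v => rfl)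
  have h3 : dets (ker ρ) = dets (ker ρ') := by
    refine dets_congr (Equiv.sumComm (Fin n) (Fin b)) (ker ρ') (ker ρ) (fun w => ?_)
    have : ρ' (w ∘ ⇑(Equiv.sumComm (Fin n) (Fin b))) = ρ w := by
      show q _ + π _ = π _ + q _
      rw [add_comm]
      congr 1
    constructor
    · intro hw; show ρ' _ = 0; rw [this]; exact hw
    · intro hw; show ρ w = 0; rw [← this]; exact hw
  rw [← h1, h3, h2]

lemma minorsIdeal_eq_dets {a b : ℕ} (H : Matrix (Fin a) (Fin b) R) :
    minorsIdeal R H = dets (LinearMap.range H.vecMulLinear) := by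
  rw [range_vecMulLinear, dets_span, minorsIdeal]
  congr 1
  ext r
  constructor
  · rintro ⟨f, rfl⟩
    exact ⟨H.submatrix f _root_.id, fun i => ⟨f i, rfl⟩, rfl⟩
  · rintro ⟨S, hS, rfl⟩
    choose f hf using hS
    have hHS : H.submatrix f _root_.id = S := by
      ext i j
      rw [Matrix.submatrix_apply]
      exact congrFun (hf i) j
    exact ⟨f, by rw [hHS]⟩

/-- the row-embedding linear map -/
noncomputable def rowEmb (n : ℕ) (z : Fin n) : (Fin n → R) →ₗ[R] Matrix (Fin n) (Fin n) R where
  toFun v := Matrix.of fun i j => if i = z then v j else 0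
  map_add' u v := by
    ext i j
    simp only [Matrix.of_apply, Matrix.add_apply]
    split <;> simp
  map_smul' r v := by
    ext i j
    simp only [Matrix.of_apply, Matrix.smul_apply, RingHom.id_apply, smul_eq_mul]
    split <;> simp

lemma stdBasis_one_mul {n : ℕ} (i j : Fin n) (x : Matrix (Fin n) (Fin n) R) :
    Matrix.single i j (1 : R) * x = Matrix.of fun a b => if a = i then x j b else 0 := by
  ext a b
  rw [Matrix.mul_apply, Matrix.of_apply]
  by_cases hai : a = i
  · subst hai
    rw [if_pos rfl]
    rw [Finset.sum_eq_single j]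
    · simp [Matrix.single]
    · intro l _ hl
      simp [Matrix.single, Ne.symm hl]
    · simp
  · rw [if_neg hai, Finset.sum_eq_zero]
    intro l _
    simp only [Matrix.single, Matrix.of_apply, ite_and, boole_mul, ite_mul, one_mul,
      zero_mul]
    rw [if_neg (fun h : i = a => hai h.symm)]

end AuxDets

/-- For a finitely generated left ideal `I` of `Λ = M_{n×n}(R)`,
`Fit_Λ(Λ/I) = ⟨det(x) : x ∈ I⟩_R`, the `R`-ideal generated by the determinants
of all elements of `I`. -/
theorem fitIdeal_quotient_leftIdeal (n : ℕ) (hn : 0 < n) (R : Type*) [CommRing R]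
    (I : Ideal (Matrix (Fin n) (Fin n) R)) (hfg : I.FG) :
    fitIdeal R (eComponent n R (Matrix (Fin n) (Fin n) R ⧸ I) ⟨0, hn⟩) =
      Ideal.span {r : R | ∃ x ∈ I, r = x.det} := by
  classical
  set z : Fin n := ⟨0, hn⟩ with hz
  set J : Ideal R := Ideal.span {r : R | ∃ x ∈ I, r = x.det} with hJdef
  set φ : (Fin n → R) →ₗ[R] Matrix (Fin n) (Fin n) R := rowEmb n z with hφ
  have hφ_apply : ∀ v i j, φ v i j = if i = z then v j else 0 := fun v i j => rfl
  set ψ : (Fin n → R) →ₗ[R] (Matrix (Fin n) (Fin n) R ⧸ I) :=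
    (I.mkQ.restrictScalars R).comp φ with hψ
  have hψ_apply : ∀ v, ψ v = Submodule.Quotient.mk (φ v) := fun v => rfl
  -- E * φ v = φ v
  have hEφ : ∀ v, Matrix.single z z (1:R) * φ v = φ v := by
    intro v
    rw [stdBasis_one_mul]
    ext a b
    simp only [Matrix.of_apply, hφ_apply]
    split <;> simp
  have hmem : ∀ v, ψ v ∈ eComponent n R (Matrix (Fin n) (Fin n) R ⧸ I) z := by
    intro v
    refine ⟨ψ v, ?_⟩
    show Matrix.single z z (1:R) • ψ v = ψ v
    rw [hψ_apply, ← Submodule.Quotient.mk_smul, smul_eq_mul, hEφ]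
  set q : (Fin n → R) →ₗ[R] ↥(eComponent n R (Matrix (Fin n) (Fin n) R ⧸ I) z) :=
    ψ.codRestrict _ hmem with hq
  have hq_apply : ∀ v, (q v : Matrix (Fin n) (Fin n) R ⧸ I) = Submodule.Quotient.mk (φ v) :=
    fun v => rfl
  -- surjectivity of q
  have hq_surj : Function.Surjective q := by
    rintro ⟨y, hy⟩
    obtain ⟨x, hx⟩ := hy
    obtain ⟨w, rfl⟩ := Submodule.Quotient.mk_surjective I x
    have heMul : ∀ x : Matrix (Fin n) (Fin n) R ⧸ I,
        (eMul n R (Matrix (Fin n) (Fin n) R ⧸ I) z) x = Matrix.single z z (1:R) • x :=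
      fun x => rfl
    have hyx : (eMul n R (Matrix (Fin n) (Fin n) R ⧸ I) z) (Submodule.Quotient.mk w) =
        Submodule.Quotient.mk (φ (w z)) := by
      rw [heMul, ← Submodule.Quotient.mk_smul, smul_eq_mul, stdBasis_one_mul]
      congr 1
    refine ⟨w z, Subtype.ext ?_⟩
    show (q (w z) : Matrix (Fin n) (Fin n) R ⧸ I) = y
    rw [hq_apply, ← hx, hyx]
  -- kernel of q
  have hker : ∀ v, v ∈ LinearMap.ker q ↔ φ v ∈ I := by
    intro v
    rw [LinearMap.ker_codRestrict]
    show ψ v = 0 ↔ _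
    rw [hψ_apply, Submodule.Quotient.mk_eq_zero]
  -- dets (ker q) = J
  have hdetsJ : dets (LinearMap.ker q) = J := by
    apply le_antisymm
    · rw [dets, Ideal.span_le]
      rintro r ⟨S, hS, rfl⟩
      set X : Matrix (Fin n) (Fin n) R :=
        ∑ i, Matrix.single i z (1:R) * φ (S i) with hX
      have hXI : X ∈ I := by
        refine Submodule.sum_mem _ fun i _ => ?_
        rw [← smul_eq_mul]
        exact Submodule.smul_mem _ _ ((hker (S i)).mp (hS i))
      have hXS : X = S := by
        rw [hX]
        ext a b
        rw [Matrix.sum_apply]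
        have : ∀ i, (Matrix.single i z (1:R) * φ (S i)) a b
            = if a = i then S i b else 0 := by
          intro i
          rw [stdBasis_one_mul]
          simp only [Matrix.of_apply, hφ_apply]
          split <;> simp
        simp only [this]
        rw [Finset.sum_ite_eq (Finset.univ : Finset (Fin n)) a (fun i => S i b)]
        simp
      exact Ideal.subset_span ⟨X, hXI, by rw [hXS]⟩
    · rw [hJdef, Ideal.span_le]
      rintro r ⟨x, hx, rfl⟩
      refine det_mem_dets (fun i => ?_)
      rw [hker]
      have : φ (x i) = Matrix.single z i (1:R) * x := by
        rw [stdBasis_one_mul]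
        ext a b
        simp only [Matrix.of_apply, hφ_apply]
      rw [this, ← smul_eq_mul]
      exact Submodule.smul_mem _ _ hx
  apply le_antisymm
  · rw [fitIdeal]
    refine iSup_le fun a => iSup_le fun b => iSup_le fun H => iSup_le fun π =>
      iSup_le fun hpres => ?_
    rw [minorsIdeal_eq_dets, ← hpres.2, dets_ker_eq π hpres.1 q hq_surj, hdetsJ]
  · -- construct the canonical presentation
    obtain ⟨k, g, hg⟩ := Submodule.fg_iff_exists_fin_generating_family.mp hfg
    set Hc : Matrix (Fin (k * n)) (Fin n) R :=
      Matrix.of (fun p j => g (finProdFinEquiv.symm p).1 ((finProdFinEquiv.symm p).2) j) with hHc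
    have hrowc : ∀ (i : Fin k) (j : Fin n),
        Hc (finProdFinEquiv (i, j)) = fun l => g i j l := by
      intro i j
      funext l
      show Matrix.of _ (finProdFinEquiv (i,j)) l = _
      rw [Matrix.of_apply, Equiv.symm_apply_apply]
    have hkerq : LinearMap.ker q = LinearMap.range Hc.vecMulLinear := by
      rw [range_vecMulLinear]
      apply le_antisymm
      · intro v hv
        have hφI : φ v ∈ Submodule.span (Matrix (Fin n) (Fin n) R) (Set.range g) := by
          rw [hg]; exact (hker v).mp hv
        rw [Submodule.mem_span_range_iff_exists_fun] at hφI
        obtain ⟨a, ha⟩ := hφI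
        have hveq : v = ∑ i : Fin k, ∑ j : Fin n, (a i z j) • Hc (finProdFinEquiv (i, j)) := by
          funext l
          have h1 : v l = φ v z l := by
            rw [hφ_apply]; simp
          rw [h1, ← ha]
          rw [Matrix.sum_apply, Finset.sum_apply]  -- (∑ a i • g i) z l
          simp only [Finset.sum_apply, Pi.smul_apply, smul_eq_mul, hrowc]
          rw [Finset.sum_congr rfl (fun i _ => ?_)]
          rw [Matrix.mul_apply]
        rw [hveq]
        exact Submodule.sum_mem _ fun i _ => Submodule.sum_mem _ fun j _ =>
          Submodule.smul_mem _ _ (Submodule.subset_span ⟨finProdFinEquiv (i, j), rfl⟩)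
      · rw [Submodule.span_le]
        rintro _ ⟨p, rfl⟩
        rw [SetLike.mem_coe, hker]
        set ij := finProdFinEquiv.symm p with hij
        have hrow : Hc p = fun l => g ij.1 ij.2 l := by
          funext l; rfl
        have : φ (Hc p) = Matrix.single z ij.2 (1:R) * g ij.1 := by
          rw [stdBasis_one_mul]
          ext s t
          simp only [Matrix.of_apply, hφ_apply, hrow]
        change φ (Hc p) ∈ I
        rw [this, ← smul_eq_mul]
        refine Submodule.smul_mem _ _ ?_
        rw [← hg]
        exact Submodule.subset_span ⟨ij.1, rfl⟩
    have hpres : IsPresentation R Hc _ q := ⟨hq_surj, hkerq⟩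
    have : J = minorsIdeal R Hc := by
      rw [minorsIdeal_eq_dets, ← hkerq, hdetsJ]
    rw [this, fitIdeal]
    exact le_iSup_of_le (k * n) <| le_iSup_of_le n <| le_iSup_of_le Hc <|
      le_iSup_of_le q <| le_iSup_of_le hpres le_rfl
end

section
/- Let R be a commutative ring and let 0 → M₁ → M₂ → M₃ → 0 be a short exact sequence of finitely presented R-modules. If M₃ has a quadratic presentation, i.e. there is an exact sequence R^k --h--> R^k ->> M₃ for some k (with h not required to be injective), then Fit_R(M₁) · Fit_R(M₃) = Fit_R(M₂). -/
open Matrix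

namespace FitAux

open Matrix LinearMap Submodule

variable {R : Type*} [CommRing R]

noncomputable def minors {ι κ : Type*} [Fintype κ] [DecidableEq κ] (H : Matrix ι κ R) : Ideal R :=
  Ideal.span {x : R | ∃ f : κ → ι, x = ((H.submatrix f _root_.id).det)}

lemma minorsIdeal_eq {a b : ℕ} (H : Matrix (Fin a) (Fin b) R) : minorsIdeal R H = minors H := rfl

lemma det_mem_minors {ι κ : Type*} [Fintype κ] [DecidableEq κ] (H : Matrix ι κ R) (f : κ → ι) :
    (H.submatrix f _root_.id).det ∈ minors H := Ideal.subset_span ⟨f, rfl⟩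

lemma det_expand {n ι : Type*} [Fintype n] [DecidableEq n] [Fintype ι]
    (v : n → n → R) (w : ι → n → R) (c : n → ι → R)
    (hv : ∀ i, v i = ∑ x : ι, c i x • w x) :
    (Matrix.of v).det = ∑ r : n → ι, (∏ i, c i (r i)) • (Matrix.of (fun i => w (r i))).det := by
  classical
  have h0 : (Matrix.of v).det
      = (Matrix.detRowAlternating (R := R) (n := n)).toMultilinearMap
        (fun i => ∑ x : ι, c i x • w x) := by
    rw [show (fun i => ∑ x : ι, c i x • w x) = v from funext fun i => (hv i).symm]
    rfl
  rw [h0, MultilinearMap.map_sum]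
  refine Finset.sum_congr rfl fun r _ => ?_
  rw [show (fun i => c i (r i) • w (r i)) = fun i => c i (r i) • w (r i) from rfl,
    MultilinearMap.map_smul_univ]
  rfl

lemma det_eq_zero_of_small_span {n ι : Type*} [Fintype n] [DecidableEq n] [Fintype ι]
    (v : n → n → R) (w : ι → n → R)
    (hcard : Fintype.card ι < Fintype.card n)
    (hv : ∀ i, ∃ c : ι → R, v i = ∑ x : ι, c x • w x) :
    (Matrix.of v).det = 0 := by
  choose c hc using hv
  rw [det_expand v w (fun i => c i) hc]
  refine Finset.sum_eq_zero fun r _ => ?_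
  obtain ⟨i, j, hne, heq⟩ := Fintype.exists_ne_map_eq_of_card_lt r hcard
  rw [Matrix.det_zero_of_row_eq hne (show w (r i) = w (r j) by rw [heq]), smul_zero]

lemma det_mem_span_dets {n ι : Type*} [Fintype n] [DecidableEq n] [Fintype ι]
    (v : n → n → R) (w : ι → n → R)
    (hv : ∀ i, ∃ c : ι → R, v i = ∑ x : ι, c x • w x) :
    (Matrix.of v).det ∈ Ideal.span {x : R | ∃ r : n → ι, x = (Matrix.of (fun i => w (r i))).det} := by
  choose c hc using hv
  rw [det_expand v w (fun i => c i) hc]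
  exact Ideal.sum_mem _ fun r _ => Submodule.smul_mem _ _ (Ideal.subset_span ⟨r, rfl⟩)

lemma minors_le_minors {ι ι' κ : Type*} [Fintype ι] [Fintype κ] [DecidableEq κ]
    (H : Matrix ι κ R) (H' : Matrix ι' κ R)
    (h : ∀ i, H' i ∈ Submodule.span R (Set.range H)) : minors H' ≤ minors H := by
  rw [minors, Ideal.span_le]
  rintro x ⟨f, rfl⟩
  have h' : ∀ i : κ, ∃ cc : ι → R, H' (f i) = ∑ x : ι, cc x • H x := fun i => by
    obtain ⟨cc, hcc⟩ := (mem_span_range_iff_exists_fun R).mp (h (f i))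
    exact ⟨cc, hcc.symm⟩
  exact det_mem_span_dets (fun i => H' (f i)) (fun j => H j) h'

lemma fromBlocks_submatrix_map {ι₁ ι₂ κ₁ κ₂ κ₁' κ₂' : Type*}
    (A : Matrix ι₁ κ₁ R) (B : Matrix ι₁ κ₂ R) (C : Matrix ι₂ κ₁ R) (D : Matrix ι₂ κ₂ R)
    (g : κ₁' → ι₁) (h : κ₂' → ι₂) :
    (fromBlocks A B C D).submatrix (Sum.map g h) _root_.id =
      fromBlocks (A.submatrix g _root_.id) (B.submatrix g _root_.id)
        (C.submatrix h _root_.id) (D.submatrix h _root_.id) := by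
  ext i j
  cases i <;> cases j <;> rfl

lemma det_eq_sign_mul {n : Type*} [Fintype n] [DecidableEq n] (M : Matrix n n R)
    (σ : Equiv.Perm n) :
    M.det = ((Equiv.Perm.sign σ : ℤ) : R) * (M.submatrix σ _root_.id).det := by
  rw [Matrix.det_permute, ← mul_assoc]
  rcases Int.units_eq_one_or (Equiv.Perm.sign σ) with hs | hs <;> simp [hs]

/-- Key shape lemma 1: `[[A, 0], [C, D]]` with `D` square. -/
lemma minors_fromBlocks_le {ι₁ κ₁ κ₂ : Type*} [Fintype ι₁] [Fintype κ₁] [DecidableEq κ₁]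
    [Fintype κ₂] [DecidableEq κ₂]
    (A : Matrix ι₁ κ₁ R) (C : Matrix κ₂ κ₁ R) (D : Matrix κ₂ κ₂ R) :
    minors (fromBlocks A 0 C D) ≤ minors A * Ideal.span {D.det} := by
  classical
  rw [minors, Ideal.span_le]
  rintro x ⟨f, rfl⟩
  set B : Matrix (ι₁ ⊕ κ₂) (κ₁ ⊕ κ₂) R := fromBlocks A 0 C D with hB
  by_cases hinj : Function.Injective f
  swap
  · simp only [Function.Injective] at hinj
    push_neg at hinj
    obtain ⟨i, j, hfe, hne⟩ := hinj
    have hz : (B.submatrix f _root_.id).det = 0 :=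
      Matrix.det_zero_of_row_eq hne (by funext c; simp [Matrix.submatrix_apply, hfe])
    rw [hz]; exact Ideal.zero_mem _
  set p : κ₁ ⊕ κ₂ → Prop := fun i => (f i).isRight with hp
  have hfRinj : Function.Injective (fun i : {i // p i} => (f i.1).getRight i.2) := by
    intro i j hij
    apply Subtype.ext
    apply hinj
    obtain ⟨bi, hbi⟩ := Sum.isRight_iff.mp i.2
    obtain ⟨bj, hbj⟩ := Sum.isRight_iff.mp j.2
    simp only [hbi, hbj, Sum.getRight_inr] at hij ⊢
    rw [hij]
  have hcards : Fintype.card {i // p i} + Fintype.card {i // ¬ p i}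
      = Fintype.card κ₁ + Fintype.card κ₂ := by
    rw [← Fintype.card_sum, Fintype.card_congr (Equiv.sumCompl p), Fintype.card_sum]
  by_cases hcard : Fintype.card {i // p i} < Fintype.card κ₂
  · -- too few bottom rows: determinant is zero
    have hz : (B.submatrix f _root_.id).det = 0 := by
      refine det_eq_zero_of_small_span (fun i => B (f i))
        (Sum.elim (fun c0 : κ₁ => fun col : κ₁ ⊕ κ₂ => if col = Sum.inl c0 then (1:R) else 0)
          (fun j : {i // p i} => B (f j.1))) ?_ ?_
      · simp only [Fintype.card_sum]
        omega
      · intro i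
        by_cases hi : p i
        · refine ⟨Pi.single (Sum.inr ⟨i, hi⟩) (1:R), ?_⟩
          simp [Pi.single_apply, ite_smul]
        · obtain ⟨a, ha⟩ := Sum.isLeft_iff.mp (Sum.not_isRight.mp hi)
          refine ⟨Sum.elim (fun c0 => A a c0) 0, ?_⟩
          funext col
          simp only [Finset.sum_apply, Fintype.sum_sum_type, Sum.elim_inl, Sum.elim_inr,
            Pi.smul_apply, smul_eq_mul, zero_mul, Finset.sum_const_zero, add_zero, ha,
            Pi.zero_apply, zero_smul]
          cases col with
          | inl c' => simp [hB, mul_ite, Finset.sum_ite_eq]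
          | inr c' => simp [hB]
    rw [hz]; exact Ideal.zero_mem _
  · -- exactly κ₂ bottom rows, bijective onto them
    push_neg at hcard
    have hle : Fintype.card {i // p i} ≤ Fintype.card κ₂ := Fintype.card_le_of_injective _ hfRinj
    have hcardeq : Fintype.card {i // p i} = Fintype.card κ₂ := le_antisymm hle hcard
    have bij : Function.Bijective (fun i : {i // p i} => (f i.1).getRight i.2) :=
      (Fintype.bijective_iff_injective_and_card _).mpr ⟨hfRinj, hcardeq⟩
    set e₂ : κ₂ ≃ {i // p i} := (Equiv.ofBijective _ bij).symm with he₂def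
    have he₂ : ∀ j, f (e₂ j).1 = Sum.inr j := by
      intro j
      have h1 : (f (e₂ j).1).getRight (e₂ j).2 = j :=
        (Equiv.ofBijective _ bij).apply_symm_apply j
      obtain ⟨b, hb⟩ := Sum.isRight_iff.mp (e₂ j).2
      simp only [hb, Sum.getRight_inr] at h1
      rw [hb, h1]
    have ecard : Fintype.card κ₁ = Fintype.card {i // ¬ p i} := by omega
    set e₁ : κ₁ ≃ {i // ¬ p i} := Fintype.equivOfCardEq ecard with he₁def
    set σ : Equiv.Perm (κ₁ ⊕ κ₂) :=
      (Equiv.sumCongr e₁ e₂).trans ((Equiv.sumComm _ _).trans (Equiv.sumCompl p)) with hσdef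
    have hσl : ∀ c0, σ (Sum.inl c0) = (e₁ c0).1 := fun c0 => rfl
    have hσr : ∀ j, σ (Sum.inr j) = (e₂ j).1 := fun j => rfl
    have hL : ∀ c0 : κ₁, (f (e₁ c0).1).isLeft := fun c0 => Sum.not_isRight.mp (e₁ c0).2
    set g : κ₁ → ι₁ := fun c0 => (f (e₁ c0).1).getLeft (hL c0) with hgdef
    have hfσ : f ∘ σ = Sum.map g _root_.id := by
      funext i
      cases i with
      | inl c0 =>
        obtain ⟨a, ha⟩ := Sum.isLeft_iff.mp (hL c0)
        simp only [Function.comp_apply, hσl, Sum.map_inl, ha, hgdef, Sum.getLeft_inl]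
      | inr j =>
        simp only [Function.comp_apply, hσr, Sum.map_inr, he₂, _root_.id]
    have hsub : (B.submatrix f _root_.id).submatrix σ _root_.id
        = fromBlocks (A.submatrix g _root_.id) 0 C D := by
      have h1 : (B.submatrix f _root_.id).submatrix σ _root_.id
          = B.submatrix (f ∘ σ) _root_.id := by
        ext i j; rfl
      rw [h1, hfσ, hB, fromBlocks_submatrix_map]
      simp [Matrix.submatrix_id_id]
    have hdet : (B.submatrix f _root_.id).det
        = ((Equiv.Perm.sign σ : ℤ) : R) * ((A.submatrix g _root_.id).det * D.det) := by
      rw [det_eq_sign_mul _ σ, hsub, Matrix.det_fromBlocks_zero₁₂]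
    rw [hdet]
    exact Ideal.mul_mem_left _ _
      (Ideal.mul_mem_mul (det_mem_minors A g) (Ideal.subset_span rfl))

/-- Key shape lemma 2: `[[A, E], [0, D]]` with `A` square. -/
lemma minors_fromBlocks_le' {κ₁ κ₂ ι₂ : Type*} [Fintype κ₁] [DecidableEq κ₁]
    [Fintype κ₂] [DecidableEq κ₂] [Fintype ι₂]
    (A : Matrix κ₁ κ₁ R) (E : Matrix κ₁ κ₂ R) (D : Matrix ι₂ κ₂ R) :
    minors (fromBlocks A E 0 D) ≤ Ideal.span {A.det} * minors D := by
  classical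
  rw [minors, Ideal.span_le]
  rintro x ⟨f, rfl⟩
  set B : Matrix (κ₁ ⊕ ι₂) (κ₁ ⊕ κ₂) R := fromBlocks A E 0 D with hB
  by_cases hinj : Function.Injective f
  swap
  · simp only [Function.Injective] at hinj
    push_neg at hinj
    obtain ⟨i, j, hfe, hne⟩ := hinj
    have hz : (B.submatrix f _root_.id).det = 0 :=
      Matrix.det_zero_of_row_eq hne (by funext c; simp [Matrix.submatrix_apply, hfe])
    rw [hz]; exact Ideal.zero_mem _
  set p : κ₁ ⊕ κ₂ → Prop := fun i => (f i).isLeft with hp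
  have hfLinj : Function.Injective (fun i : {i // p i} => (f i.1).getLeft i.2) := by
    intro i j hij
    apply Subtype.ext
    apply hinj
    obtain ⟨bi, hbi⟩ := Sum.isLeft_iff.mp i.2
    obtain ⟨bj, hbj⟩ := Sum.isLeft_iff.mp j.2
    simp only [hbi, hbj, Sum.getLeft_inl] at hij ⊢
    rw [hij]
  have hcards : Fintype.card {i // p i} + Fintype.card {i // ¬ p i}
      = Fintype.card κ₁ + Fintype.card κ₂ := by
    rw [← Fintype.card_sum, Fintype.card_congr (Equiv.sumCompl p), Fintype.card_sum]
  by_cases hcard : Fintype.card {i // p i} < Fintype.card κ₁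
  · -- too few top rows: determinant is zero
    have hz : (B.submatrix f _root_.id).det = 0 := by
      refine det_eq_zero_of_small_span (fun i => B (f i))
        (Sum.elim (fun j : {i // p i} => B (f j.1))
          (fun c0 : κ₂ => fun col : κ₁ ⊕ κ₂ => if col = Sum.inr c0 then (1:R) else 0)) ?_ ?_
      · simp only [Fintype.card_sum]
        omega
      · intro i
        by_cases hi : p i
        · refine ⟨Pi.single (Sum.inl ⟨i, hi⟩) (1:R), ?_⟩
          simp [Pi.single_apply, ite_smul]
        · obtain ⟨b, hb⟩ := Sum.isRight_iff.mp (Sum.not_isLeft.mp hi)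
          refine ⟨Sum.elim 0 (fun c0 => D b c0), ?_⟩
          funext col
          simp only [Finset.sum_apply, Fintype.sum_sum_type, Sum.elim_inl, Sum.elim_inr,
            Pi.smul_apply, smul_eq_mul, zero_mul, Finset.sum_const_zero, zero_add, hb,
            Pi.zero_apply, zero_smul]
          cases col with
          | inl c' => simp [hB]
          | inr c' => simp [hB, mul_ite, Finset.sum_ite_eq]
    rw [hz]; exact Ideal.zero_mem _
  · push_neg at hcard
    have hle : Fintype.card {i // p i} ≤ Fintype.card κ₁ := Fintype.card_le_of_injective _ hfLinj
    have hcardeq : Fintype.card {i // p i} = Fintype.card κ₁ := le_antisymm hle hcard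
    have bij : Function.Bijective (fun i : {i // p i} => (f i.1).getLeft i.2) :=
      (Fintype.bijective_iff_injective_and_card _).mpr ⟨hfLinj, hcardeq⟩
    set e₁ : κ₁ ≃ {i // p i} := (Equiv.ofBijective _ bij).symm with he₁def
    have he₁ : ∀ c0, f (e₁ c0).1 = Sum.inl c0 := by
      intro c0
      have h1 : (f (e₁ c0).1).getLeft (e₁ c0).2 = c0 :=
        (Equiv.ofBijective _ bij).apply_symm_apply c0
      obtain ⟨b, hb⟩ := Sum.isLeft_iff.mp (e₁ c0).2
      simp only [hb, Sum.getLeft_inl] at h1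
      rw [hb, h1]
    have ecard : Fintype.card κ₂ = Fintype.card {i // ¬ p i} := by omega
    set e₂ : κ₂ ≃ {i // ¬ p i} := Fintype.equivOfCardEq ecard with he₂def
    set σ : Equiv.Perm (κ₁ ⊕ κ₂) :=
      (Equiv.sumCongr e₁ e₂).trans (Equiv.sumCompl p) with hσdef
    have hσl : ∀ c0, σ (Sum.inl c0) = (e₁ c0).1 := fun c0 => rfl
    have hσr : ∀ j, σ (Sum.inr j) = (e₂ j).1 := fun j => rfl
    have hRt : ∀ j : κ₂, (f (e₂ j).1).isRight := fun j => Sum.not_isLeft.mp (e₂ j).2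
    set h : κ₂ → ι₂ := fun j => (f (e₂ j).1).getRight (hRt j) with hhdef
    have hfσ : f ∘ σ = Sum.map _root_.id h := by
      funext i
      cases i with
      | inl c0 =>
        simp only [Function.comp_apply, hσl, Sum.map_inl, he₁, _root_.id]
      | inr j =>
        obtain ⟨b, hb⟩ := Sum.isRight_iff.mp (hRt j)
        simp only [Function.comp_apply, hσr, Sum.map_inr, hb, hhdef, Sum.getRight_inr]
    have hsub : (B.submatrix f _root_.id).submatrix σ _root_.id
        = fromBlocks A E 0 (D.submatrix h _root_.id) := by
      have h1 : (B.submatrix f _root_.id).submatrix σ _root_.id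
          = B.submatrix (f ∘ σ) _root_.id := by
        ext i j; rfl
      rw [h1, hfσ, hB, fromBlocks_submatrix_map]
      simp [Matrix.submatrix_id_id]
    have hdet : (B.submatrix f _root_.id).det
        = ((Equiv.Perm.sign σ : ℤ) : R) * (A.det * (D.submatrix h _root_.id).det) := by
      rw [det_eq_sign_mul _ σ, hsub, Matrix.det_fromBlocks_zero₂₁]
    rw [hdet]
    exact Ideal.mul_mem_left _ _
      (Ideal.mul_mem_mul (Ideal.subset_span rfl) (det_mem_minors D h))

lemma vecMul_eq_sum_smul {ι κ : Type*} [Fintype ι] (v : ι → R) (M : Matrix ι κ R) :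
    v ᵥ* M = ∑ i, v i • M i := by
  funext j
  simp [Matrix.vecMul, dotProduct, Finset.sum_apply]

lemma map_pi_eq_sum {κ : Type*} [Fintype κ] [DecidableEq κ] {M : Type*} [AddCommGroup M]
    [Module R M] (π : (κ → R) →ₗ[R] M) (v : κ → R) :
    π v = ∑ j, v j • π (Pi.single j 1) := by
  have hv : v = ∑ j, v j • (Pi.single j 1 : κ → R) := by
    funext c
    simp [Finset.sum_apply, Pi.single_apply, mul_ite, Finset.sum_ite_eq]
  conv_lhs => rw [hv]
  rw [map_sum]
  simp

lemma row_mem_ker {ι κ : Type*} [Fintype ι] {M : Type*} [AddCommGroup M] [Module R M]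
    (H : Matrix ι κ R) (π : (κ → R) →ₗ[R] M)
    (hk : LinearMap.ker π = LinearMap.range H.vecMulLinear) (i : ι) : π (H i) = 0 := by
  have : H i ∈ LinearMap.ker π := by
    rw [hk, range_vecMulLinear]
    exact Submodule.subset_span ⟨i, rfl⟩
  exact this

/-- Fitting's lemma: any two finite presentations of a module have the same ideal of
maximal minors. -/
theorem minors_eq_of_pres {M : Type*} [AddCommGroup M] [Module R M]
    {ι κ ι' κ' : Type*} [Fintype ι] [Fintype κ] [DecidableEq κ]
    [Fintype ι'] [Fintype κ'] [DecidableEq κ']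
    (H : Matrix ι κ R) (π : (κ → R) →ₗ[R] M) (hs : Function.Surjective π)
    (hk : LinearMap.ker π = LinearMap.range H.vecMulLinear)
    (H' : Matrix ι' κ' R) (π' : (κ' → R) →ₗ[R] M) (hs' : Function.Surjective π')
    (hk' : LinearMap.ker π' = LinearMap.range H'.vecMulLinear) :
    minors H = minors H' := by
  classical
  choose U hU using fun j : κ => hs' (π (Pi.single j 1))
  choose V hV using fun j' : κ' => hs (π' (Pi.single j' 1))
  set K : Matrix (κ ⊕ ι') (κ ⊕ κ') R := fromBlocks 1 (-(Matrix.of U)) 0 H' with hK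
  set K' : Matrix (ι ⊕ κ') (κ ⊕ κ') R := fromBlocks H 0 (-(Matrix.of V)) 1 with hK'
  set π'' : ((κ ⊕ κ') → R) →ₗ[R] M :=
    π ∘ₗ LinearMap.funLeft R R Sum.inl + π' ∘ₗ LinearMap.funLeft R R Sum.inr with hπ''
  have hπ''apply : ∀ z : (κ ⊕ κ') → R, π'' z = π (z ∘ Sum.inl) + π' (z ∘ Sum.inr) :=
    fun z => rfl
  -- auxiliary: π' (v ᵥ* U) = π v  and  π (w ᵥ* V) = π' w
  have hπU : ∀ v : κ → R, π' (v ᵥ* Matrix.of U) = π v := by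
    intro v
    rw [vecMul_eq_sum_smul, map_sum, map_pi_eq_sum π v]
    simp only [_root_.map_smul]
    refine Finset.sum_congr rfl fun j _ => ?_
    rw [show (Matrix.of U) j = U j from rfl, hU]
  have hπV : ∀ w : κ' → R, π (w ᵥ* Matrix.of V) = π' w := by
    intro w
    rw [vecMul_eq_sum_smul, map_sum, map_pi_eq_sum π' w]
    simp only [_root_.map_smul]
    refine Finset.sum_congr rfl fun j _ => ?_
    rw [show (Matrix.of V) j = V j from rfl, hV]
  have hone : ∀ j : κ, ((1 : Matrix κ κ R) j) = Pi.single j (1:R) := by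
    intro j; funext c
    rw [Matrix.one_apply, Pi.single_apply]
    exact if_congr eq_comm rfl rfl
  have hone' : ∀ j : κ', ((1 : Matrix κ' κ' R) j) = Pi.single j (1:R) := by
    intro j; funext c
    rw [Matrix.one_apply, Pi.single_apply]
    exact if_congr eq_comm rfl rfl
  -- kernel computations
  have K1 : LinearMap.range K.vecMulLinear = LinearMap.ker π'' := by
    apply le_antisymm
    · rw [range_vecMulLinear, Submodule.span_le]
      rintro _ ⟨i, rfl⟩
      rw [SetLike.mem_coe, LinearMap.mem_ker, hπ''apply]
      cases i with
      | inl j =>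
        have h1 : K.row (Sum.inl j) ∘ Sum.inl = Pi.single j (1:R) := hone j
        have h2 : K.row (Sum.inl j) ∘ Sum.inr = -(U j) := rfl
        rw [h1, h2, map_neg, hU j, add_neg_cancel]
      | inr i' =>
        have h1 : K.row (Sum.inr i') ∘ Sum.inl = 0 := rfl
        have h2 : K.row (Sum.inr i') ∘ Sum.inr = H' i' := rfl
        rw [h1, h2, map_zero, row_mem_ker H' π' hk' i', zero_add]
    · rintro z hz
      rw [LinearMap.mem_ker, hπ''apply] at hz
      have hyU : (z ∘ Sum.inr) + (z ∘ Sum.inl) ᵥ* Matrix.of U ∈ LinearMap.ker π' := by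
        rw [LinearMap.mem_ker, map_add, hπU, add_comm]
        exact hz
      rw [hk'] at hyU
      obtain ⟨t, ht⟩ := hyU
      rw [Matrix.vecMulLinear_apply] at ht
      refine ⟨Sum.elim (z ∘ Sum.inl) t, ?_⟩
      rw [Matrix.vecMulLinear_apply, hK, Matrix.vecMul_fromBlocks]
      simp only [Sum.elim_comp_inl, Sum.elim_comp_inr, Matrix.vecMul_one, Matrix.vecMul_zero,
        add_zero, Matrix.vecMul_neg, ht]
      funext i
      cases i with
      | inl c => simp
      | inr c => simp
  have K2 : LinearMap.range K'.vecMulLinear = LinearMap.ker π'' := by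
    apply le_antisymm
    · rw [range_vecMulLinear, Submodule.span_le]
      rintro _ ⟨i, rfl⟩
      rw [SetLike.mem_coe, LinearMap.mem_ker, hπ''apply]
      cases i with
      | inl j =>
        have h1 : K'.row (Sum.inl j) ∘ Sum.inl = H j := rfl
        have h2 : K'.row (Sum.inl j) ∘ Sum.inr = 0 := rfl
        rw [h1, h2, map_zero, row_mem_ker H π hk j, zero_add]
      | inr j' =>
        have h1 : K'.row (Sum.inr j') ∘ Sum.inl = -(V j') := rfl
        have h2 : K'.row (Sum.inr j') ∘ Sum.inr = Pi.single j' (1:R) := hone' j'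
        rw [h1, h2, map_neg, hV j', neg_add_cancel]
    · rintro z hz
      rw [LinearMap.mem_ker, hπ''apply] at hz
      have hxV : (z ∘ Sum.inl) + (z ∘ Sum.inr) ᵥ* Matrix.of V ∈ LinearMap.ker π := by
        rw [LinearMap.mem_ker, map_add, hπV]
        exact hz
      rw [hk] at hxV
      obtain ⟨u, hu⟩ := hxV
      rw [Matrix.vecMulLinear_apply] at hu
      refine ⟨Sum.elim u (z ∘ Sum.inr), ?_⟩
      rw [Matrix.vecMulLinear_apply, hK', Matrix.vecMul_fromBlocks]
      simp only [Sum.elim_comp_inl, Sum.elim_comp_inr, Matrix.vecMul_one, Matrix.vecMul_zero,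
        zero_add, Matrix.vecMul_neg, hu, add_neg_cancel_right]
      exact Sum.elim_comp_inl_inr z
  -- the two generating sets span the same submodule
  have hspan : Submodule.span R (Set.range K) = Submodule.span R (Set.range K') := by
    change Submodule.span R (Set.range K.row) = Submodule.span R (Set.range K'.row)
    rw [← range_vecMulLinear, ← range_vecMulLinear, K1, K2]
  have hKK' : minors K = minors K' := by
    apply le_antisymm
    · exact minors_le_minors K' K fun i => by
        rw [← hspan]; exact Submodule.subset_span ⟨i, rfl⟩
    · exact minors_le_minors K K' fun i => by
        rw [hspan]; exact Submodule.subset_span ⟨i, rfl⟩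
  -- minors K = minors H'
  have hKH' : minors K = minors H' := by
    apply le_antisymm
    · have h1 := minors_fromBlocks_le' (1 : Matrix κ κ R) (-(Matrix.of U)) H'
      rw [Matrix.det_one, Ideal.span_singleton_one, Ideal.top_mul] at h1
      exact h1
    · rw [minors, Ideal.span_le]
      rintro x ⟨gg, rfl⟩
      have heq : (H'.submatrix gg _root_.id).det
          = (K.submatrix (Sum.map _root_.id gg) _root_.id).det := by
        have h2 : K.submatrix (Sum.map _root_.id gg) _root_.id
            = fromBlocks 1 (-(Matrix.of U)) 0 (H'.submatrix gg _root_.id) := by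
          ext i j
          cases i <;> cases j <;> rfl
        rw [h2, Matrix.det_fromBlocks_zero₂₁, Matrix.det_one, one_mul]
      rw [heq]
      exact det_mem_minors K _
  -- minors K' = minors H
  have hK'H : minors K' = minors H := by
    apply le_antisymm
    · have h1 := minors_fromBlocks_le H (-(Matrix.of V)) (1 : Matrix κ' κ' R)
      rw [Matrix.det_one, Ideal.span_singleton_one, Ideal.mul_top] at h1
      exact h1
    · rw [minors, Ideal.span_le]
      rintro x ⟨gg, rfl⟩
      have heq : (H.submatrix gg _root_.id).det
          = (K'.submatrix (Sum.map gg _root_.id) _root_.id).det := by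
        have h2 : K'.submatrix (Sum.map gg _root_.id) _root_.id
            = fromBlocks (H.submatrix gg _root_.id) 0 (-(Matrix.of V)) 1 := by
          ext i j
          cases i <;> cases j <;> rfl
        rw [h2, Matrix.det_fromBlocks_zero₁₂, Matrix.det_one, mul_one]
      rw [heq]
      exact det_mem_minors K' _
  exact hK'H.symm.trans (hKK'.symm.trans hKH')

lemma exists_pres (M : Type*) [AddCommGroup M] [Module R M] [Module.FinitePresentation R M] :
    ∃ (a b : ℕ) (H : Matrix (Fin a) (Fin b) R) (π : (Fin b → R) →ₗ[R] M),
      IsPresentation R H M π := by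
  obtain ⟨b, π, hπ⟩ := Module.Finite.exists_fin' R M
  have hfg : (LinearMap.ker π).FG := Module.FinitePresentation.fg_ker π hπ
  obtain ⟨a, sgen, hsgen⟩ := Submodule.fg_iff_exists_fin_generating_family.mp hfg
  refine ⟨a, b, Matrix.of sgen, π, hπ, ?_⟩
  rw [range_vecMulLinear]
  have : Set.range (Matrix.of sgen : Matrix (Fin a) (Fin b) R).row = Set.range sgen := rfl
  rw [this, hsgen]

theorem fitIdeal_eq_minors {M : Type*} [AddCommGroup M] [Module R M]
    [Module.FinitePresentation R M]
    {ι κ : Type*} [Fintype ι] [Fintype κ] [DecidableEq κ]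
    (H₀ : Matrix ι κ R) (π₀ : (κ → R) →ₗ[R] M) (hs : Function.Surjective π₀)
    (hk : LinearMap.ker π₀ = LinearMap.range H₀.vecMulLinear) :
    fitIdeal R M = minors H₀ := by
  apply le_antisymm
  · refine iSup_le fun a => iSup_le fun b => iSup_le fun H => iSup_le fun π =>
      iSup_le fun hp => ?_
    rw [minorsIdeal_eq]
    exact le_of_eq (minors_eq_of_pres H π hp.1 hp.2 H₀ π₀ hs hk)
  · obtain ⟨a, b, Hf, πf, hpf⟩ := exists_pres (R := R) M
    have h1 : minors H₀ = minors Hf := minors_eq_of_pres H₀ π₀ hs hk Hf πf hpf.1 hpf.2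
    rw [h1, ← minorsIdeal_eq]
    exact le_iSup_of_le a (le_iSup_of_le b (le_iSup_of_le Hf (le_iSup_of_le πf
      (le_iSup_of_le hpf le_rfl))))

end FitAux

/-- If `0 → M₁ → M₂ → M₃ → 0` is a short exact sequence of finitely presented
`R`-modules and `M₃` admits a quadratic presentation `R^k --h--> R^k ->> M₃`
(with `h` not required to be injective), then `Fit_R(M₁) · Fit_R(M₃) = Fit_R(M₂)`. -/
theorem fitIdeal_mul_eq_of_shortExact_of_quadratic (R : Type*) [CommRing R]
    (M₁ M₂ M₃ : Type*) [AddCommGroup M₁] [AddCommGroup M₂] [AddCommGroup M₃]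
    [Module R M₁] [Module R M₂] [Module R M₃]
    [Module.FinitePresentation R M₁] [Module.FinitePresentation R M₂]
    [Module.FinitePresentation R M₃]
    (f : M₁ →ₗ[R] M₂) (g : M₂ →ₗ[R] M₃)
    (hf : Function.Injective f) (hg : Function.Surjective g)
    (hexact : LinearMap.range f = LinearMap.ker g)
    (hquad : ∃ (k : ℕ) (H : Matrix (Fin k) (Fin k) R) (π : (Fin k → R) →ₗ[R] M₃),
      IsPresentation R H M₃ π) :
    fitIdeal R M₁ * fitIdeal R M₃ = fitIdeal R M₂ := by
  classical
  open FitAux in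
  obtain ⟨a₁, b₁, H₁, π₁, hs₁, hk₁⟩ := FitAux.exists_pres (R := R) M₁
  obtain ⟨k, H₃, π₃, hs₃, hk₃⟩ := hquad
  -- a linear section of g over the generators of M₃
  choose σ3 hσ3 using fun i : Fin k => hg (π₃ (Pi.single i 1))
  set s : (Fin k → R) →ₗ[R] M₂ := Fintype.linearCombination R σ3 with hs_def
  have hsapply : ∀ y, s y = ∑ i, y i • σ3 i := fun y => rfl
  have hgs : ∀ y, g (s y) = π₃ y := by
    intro y
    rw [hsapply, map_sum, FitAux.map_pi_eq_sum π₃ y]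
    simp_rw [_root_.map_smul, hσ3]
  have hker3 : ∀ i : Fin k, s (H₃ i) ∈ LinearMap.range f := by
    intro i
    rw [hexact, LinearMap.mem_ker, hgs, FitAux.row_mem_ker H₃ π₃ hk₃ i]
  choose m hm using hker3
  choose cc hcc using fun i => hs₁ (m i)
  set CC : Matrix (Fin k) (Fin b₁) R := -(Matrix.of cc) with hCC
  set B : Matrix (Fin a₁ ⊕ Fin k) (Fin b₁ ⊕ Fin k) R := fromBlocks H₁ 0 CC H₃ with hB
  set π₂ : ((Fin b₁ ⊕ Fin k) → R) →ₗ[R] M₂ :=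
    f ∘ₗ π₁ ∘ₗ LinearMap.funLeft R R Sum.inl + s ∘ₗ LinearMap.funLeft R R Sum.inr with hπ₂
  have hπ₂apply : ∀ z, π₂ z = f (π₁ (z ∘ Sum.inl)) + s (z ∘ Sum.inr) := fun z => rfl
  have hsvec : ∀ t : Fin k → R, s (t ᵥ* H₃) = f (π₁ (t ᵥ* Matrix.of cc)) := by
    intro t
    rw [FitAux.vecMul_eq_sum_smul, FitAux.vecMul_eq_sum_smul, map_sum, map_sum, map_sum]
    refine Finset.sum_congr rfl fun i _ => ?_
    rw [_root_.map_smul, _root_.map_smul, _root_.map_smul]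
    rw [show (Matrix.of cc) i = cc i from rfl, hcc, hm]
  have hsurj : Function.Surjective π₂ := by
    intro m₂
    obtain ⟨y, hy⟩ := hs₃ (g m₂)
    have hmem : m₂ - s y ∈ LinearMap.ker g := by
      rw [LinearMap.mem_ker, map_sub, hgs, hy, sub_self]
    rw [← hexact] at hmem
    obtain ⟨m₁', hm₁⟩ := hmem
    obtain ⟨x, hx⟩ := hs₁ m₁'
    refine ⟨Sum.elim x y, ?_⟩
    rw [hπ₂apply]
    simp only [Sum.elim_comp_inl, Sum.elim_comp_inr]
    rw [hx, hm₁, sub_add_cancel]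
  have hker₂ : LinearMap.ker π₂ = LinearMap.range B.vecMulLinear := by
    apply le_antisymm
    · rintro z hz
      rw [LinearMap.mem_ker, hπ₂apply] at hz
      have hy3 : π₃ (z ∘ Sum.inr) = 0 := by
        have hgz := congrArg g hz
        rw [map_add, map_zero, hgs] at hgz
        have hgf : g (f (π₁ (z ∘ Sum.inl))) = 0 := by
          have hmem : f (π₁ (z ∘ Sum.inl)) ∈ LinearMap.ker g := by
            rw [← hexact]; exact ⟨_, rfl⟩
          exact hmem
        rwa [hgf, zero_add] at hgz
      have hy3' : z ∘ Sum.inr ∈ LinearMap.ker π₃ := hy3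
      rw [hk₃] at hy3'
      obtain ⟨t, ht⟩ := hy3'
      rw [Matrix.vecMulLinear_apply] at ht
      have hx' : f (π₁ (z ∘ Sum.inl + t ᵥ* Matrix.of cc)) = 0 := by
        rw [map_add, map_add, ← hsvec, ht, hz]
      have hx'' : π₁ (z ∘ Sum.inl + t ᵥ* Matrix.of cc) = 0 :=
        hf (by rw [hx', map_zero])
      have hxmem : z ∘ Sum.inl + t ᵥ* Matrix.of cc ∈ LinearMap.ker π₁ := hx''
      rw [hk₁] at hxmem
      obtain ⟨u, hu⟩ := hxmem
      rw [Matrix.vecMulLinear_apply] at hu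
      refine ⟨Sum.elim u t, ?_⟩
      rw [Matrix.vecMulLinear_apply, hB, Matrix.vecMul_fromBlocks]
      simp only [Sum.elim_comp_inl, Sum.elim_comp_inr, Matrix.vecMul_zero, add_zero, zero_add,
        hu, ht, hCC, Matrix.vecMul_neg, add_neg_cancel_right]
      exact Sum.elim_comp_inl_inr z
    · rw [range_vecMulLinear, Submodule.span_le]
      rintro _ ⟨i, rfl⟩
      rw [SetLike.mem_coe, LinearMap.mem_ker, hπ₂apply]
      cases i with
      | inl j =>
        have h1 : B.row (Sum.inl j) ∘ Sum.inl = H₁ j := rfl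
        have h2 : B.row (Sum.inl j) ∘ Sum.inr = 0 := rfl
        rw [h1, h2, map_zero, FitAux.row_mem_ker H₁ π₁ hk₁ j, map_zero, add_zero]
      | inr i =>
        have h1 : B.row (Sum.inr i) ∘ Sum.inl = -(cc i) := rfl
        have h2 : B.row (Sum.inr i) ∘ Sum.inr = H₃ i := rfl
        rw [h1, h2, map_neg, map_neg, hcc, ← hm i, neg_add_cancel]
  have e₁ : fitIdeal R M₁ = FitAux.minors H₁ := FitAux.fitIdeal_eq_minors H₁ π₁ hs₁ hk₁
  have e₃ : fitIdeal R M₃ = FitAux.minors H₃ := FitAux.fitIdeal_eq_minors H₃ π₃ hs₃ hk₃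
  have e₂ : fitIdeal R M₂ = FitAux.minors B := FitAux.fitIdeal_eq_minors B π₂ hsurj hker₂
  rw [e₁, e₂, e₃]
  apply le_antisymm
  · rw [FitAux.minors, FitAux.minors, Ideal.span_mul_span', Ideal.span_le]
    rintro x hx
    rw [Set.mem_mul] at hx
    obtain ⟨y, hy, zz, hzz, hmul⟩ := hx
    obtain ⟨gg, rfl⟩ := hy
    obtain ⟨hh, rfl⟩ := hzz
    have h2 : B.submatrix (Sum.map gg hh) _root_.id
        = fromBlocks (H₁.submatrix gg _root_.id) 0 (CC.submatrix hh _root_.id)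
          (H₃.submatrix hh _root_.id) := by
      rw [hB, FitAux.fromBlocks_submatrix_map]
      congr 1
    have h3 : (H₁.submatrix gg _root_.id).det * (H₃.submatrix hh _root_.id).det
        = (B.submatrix (Sum.map gg hh) _root_.id).det := by
      rw [h2, Matrix.det_fromBlocks_zero₁₂]
    rw [← hmul, h3]
    exact FitAux.det_mem_minors B _
  · have h1 := FitAux.minors_fromBlocks_le H₁ CC H₃
    rw [← hB] at h1
    refine h1.trans (Ideal.mul_mono_right ?_)
    rw [Ideal.span_le, Set.singleton_subset_iff]
    have h4 := FitAux.det_mem_minors H₃ _root_.id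
    rwa [Matrix.submatrix_id_id] at h4
end

section
/- Let R be a commutative ring, n ≥ 1, Λ = M_{n×n}(R), and M a finitely presented Λ-module. For a finite presentation Λ^a --h--> Λ^b ->> M with a ≥ b, let H ∈ M_{a×b}(Λ) be the matrix of h, and for each b×b submatrix T of H let T̃ ∈ M_{nb×nb}(R) denote T read as a block matrix over R; write Fit_Λ(h) := ⟨det(T̃) : T a b×b submatrix of H⟩_R. Then: (a) Fit_Λ(h) ⊆ Fit_R(e_{11}M) for every such presentation h; and (b) Fit_R(e_{11}M) equals the supremum (sum) of the ideals Fit_Λ(h) as h ranges over all finite presentations of M with a ≥ b. In particular the maximal Fitting invariant of M over Λ equals Fit_Λ(M) = Fit_R(e_{11}M). -/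
open Matrix

/-- Right multiplication of row vectors by a matrix over a (possibly noncommutative)
ring, as a homomorphism of left modules. -/
def ncVecMulLinear {L : Type*} [Ring L] {a b : ℕ} (H : Matrix (Fin a) (Fin b) L) :
    (Fin a → L) →ₗ[L] (Fin b → L) where
  toFun v := fun j => ∑ k, v k * H k j
  map_add' v w := by funext j; simp [add_mul, Finset.sum_add_distrib]
  map_smul' c v := by funext j; simp [Finset.mul_sum, mul_assoc]

/-- `(H, π)` is a finite presentation `L^a --H--> L^b --π->> M` of the left `L`-module `M`,
where `H` acts by right multiplication on row vectors. -/
def IsNCPresentation {L : Type*} [Ring L] {a b : ℕ} (H : Matrix (Fin a) (Fin b) L)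
    (M : Type*) [AddCommGroup M] [Module L M] (π : (Fin b → L) →ₗ[L] M) : Prop :=
  Function.Surjective π ∧ LinearMap.ker π = LinearMap.range (ncVecMulLinear H)

/-- The Fitting invariant `Fit_Λ(h)` of a presentation matrix `H ∈ M_{a×b}(Λ)` over
`Λ = M_{n×n}(R)`: the `R`-ideal generated by the determinants of the `b×b` submatrices
of `H` read as `nb×nb` matrices over `R` (the reduced norms of the submatrices). -/
noncomputable def lamFit (n : ℕ) (R : Type*) [CommRing R] {a b : ℕ}
    (H : Matrix (Fin a) (Fin b) (Matrix (Fin n) (Fin n) R)) : Ideal R :=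
  Ideal.span {r : R | ∃ f : Fin b → Fin a,
    r = Matrix.det (Matrix.of fun p q : Fin b × Fin n => (H (f p.1) q.1) p.2 q.2)}




lemma range_ncVecMulLinear {L : Type*} [Ring L] {a b : ℕ} (H : Matrix (Fin a) (Fin b) L) :
    LinearMap.range (ncVecMulLinear H) = Submodule.span L (Set.range fun i j => H i j) := by
  apply le_antisymm
  · rintro _ ⟨w, rfl⟩
    have : ncVecMulLinear H w = ∑ i, w i • (fun j => H i j) := by
      funext j
      simp [ncVecMulLinear, Finset.sum_apply]
    rw [this]
    exact Submodule.sum_mem _ fun i _ =>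
      Submodule.smul_mem _ _ (Submodule.subset_span ⟨i, rfl⟩)
  · rw [Submodule.span_le]
    rintro _ ⟨i, rfl⟩
    refine ⟨Pi.single i 1, ?_⟩
    funext j
    simp [ncVecMulLinear, Pi.single_apply, ite_mul]

section Aux
variable {n : ℕ} {R : Type*} [CommRing R] {M : Type*} [AddCommGroup M]
  [Module (Matrix (Fin n) (Fin n) R) M] [Module R M]
  [IsScalarTower R (Matrix (Fin n) (Fin n) R) M]

lemma eSmul_of_mem (z : Fin n) {m : M} (hm : m ∈ eComponent n R M z) :
    Matrix.single z z (1 : R) • m = m := by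
  obtain ⟨x, rfl⟩ := hm
  show Matrix.single z z (1 : R) • (Matrix.single z z (1 : R) • x) = _
  rw [smul_smul, Matrix.single_mul_single_same, one_mul]
  rfl

/-- the `R`-linear embedding of `R^{b×n}` as row matrices into `Λ^b` -/
def rowEmbed (z : Fin n) (b : ℕ) : (Fin b × Fin n → R) →ₗ[R] (Fin b → Matrix (Fin n) (Fin n) R) where
  toFun v := fun j => Matrix.of fun s t => if s = z then v (j, t) else 0
  map_add' v w := by
    funext j; ext s t
    simp only [Matrix.of_apply, Pi.add_apply, Matrix.add_apply]
    split_ifs <;> simp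
  map_smul' r v := by
    funext j; ext s t
    simp only [Matrix.of_apply, Pi.smul_apply, Matrix.smul_apply, smul_eq_mul, RingHom.id_apply]
    split_ifs <;> simp

@[simp] lemma rowEmbed_apply (z : Fin n) {b : ℕ} (v : Fin b × Fin n → R) (j : Fin b)
    (s t : Fin n) : rowEmbed (R := R) z b v j s t = if s = z then v (j, t) else 0 := rfl

end Aux


section PartA
variable {n : ℕ} {R : Type*} [CommRing R] {M : Type*} [AddCommGroup M]
  [Module (Matrix (Fin n) (Fin n) R) M] [Module R M]
  [IsScalarTower R (Matrix (Fin n) (Fin n) R) M]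

theorem lamFit_le_fitIdeal (z : Fin n) {a b : ℕ}
    (H : Matrix (Fin a) (Fin b) (Matrix (Fin n) (Fin n) R))
    (π : (Fin b → Matrix (Fin n) (Fin n) R) →ₗ[Matrix (Fin n) (Fin n) R] M)
    (hπ : IsNCPresentation H M π) :
    lamFit n R H ≤ fitIdeal R (eComponent n R M z) := by
  classical
  set e : Matrix (Fin n) (Fin n) R := Matrix.single z z (1 : R) with he
  set Ea : Fin a × Fin n ≃ Fin (a * n) := finProdFinEquiv with hEa
  set Eb : Fin b × Fin n ≃ Fin (b * n) := finProdFinEquiv with hEb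
  -- the matrix over R
  set Ht : Matrix (Fin (a * n)) (Fin (b * n)) R := Matrix.of fun p q =>
      H (Ea.symm p).1 (Eb.symm q).1 (Ea.symm p).2 (Eb.symm q).2 with hHt
  -- e • rowEmbed v = rowEmbed v
  have hrowe : ∀ v : Fin b × Fin n → R, e • rowEmbed (R := R) z b v = rowEmbed (R := R) z b v := by
    intro v
    funext j
    ext s t
    show (e * rowEmbed (R := R) z b v j) s t = _
    by_cases hs : s = z
    · subst hs
      rw [he, Matrix.single_mul_apply_same, one_mul]
    · rw [he, Matrix.single_mul_apply_of_ne (1 : R) z z s t hs]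
      simp [hs]
  have hmem : ∀ v : Fin b × Fin n → R, π (rowEmbed (R := R) z b v) ∈ eComponent n R M z := by
    intro v
    refine ⟨π (rowEmbed (R := R) z b v), ?_⟩
    show e • π (rowEmbed (R := R) z b v) = π (rowEmbed (R := R) z b v)
    rw [← π.map_smul, hrowe]
  set π' : (Fin (b * n) → R) →ₗ[R] (eComponent n R M z) :=
    (LinearMap.codRestrict (eComponent n R M z)
        ((π.restrictScalars R).comp (rowEmbed (R := R) z b)) hmem).comp
      (LinearMap.funLeft R R (⇑Eb)) with hπ'
  have π'apply : ∀ u : Fin (b * n) → R, (π' u : M) = π (rowEmbed (R := R) z b (u ∘ Eb)) :=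
    fun u => rfl
  have hpres : IsPresentation R Ht (eComponent n R M z) π' := by
    constructor
    · rintro ⟨_, x, rfl⟩
      obtain ⟨y, hy⟩ := hπ.1 x
      refine ⟨(fun p : Fin b × Fin n => y p.1 z p.2) ∘ Eb.symm, ?_⟩
      apply Subtype.ext
      rw [π'apply]
      have hu : (((fun p : Fin b × Fin n => y p.1 z p.2) ∘ Eb.symm) ∘ Eb)
          = fun p : Fin b × Fin n => y p.1 z p.2 := by
        funext p; simp
      rw [hu]
      have hrow : rowEmbed (R := R) z b (fun p : Fin b × Fin n => y p.1 z p.2) = e • y := by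
        funext j
        ext s t
        show _ = (e * y j) s t
        by_cases hs : s = z
        · subst hs
          rw [he, Matrix.single_mul_apply_same, one_mul]
          simp
        · rw [he, Matrix.single_mul_apply_of_ne (1 : R) z z s t hs]
          simp [hs]
      rw [hrow, π.map_smul, hy]
      rfl
    · ext u
      simp only [LinearMap.mem_ker, LinearMap.mem_range]
      constructor
      · intro h0
        have hker : rowEmbed (R := R) z b (u ∘ Eb) ∈ LinearMap.ker π := by
          rw [LinearMap.mem_ker, ← π'apply u, h0, Submodule.coe_zero]
        rw [hπ.2, LinearMap.mem_range] at hker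
        obtain ⟨c, hc⟩ := hker
        refine ⟨(fun p : Fin a × Fin n => c p.1 z p.2) ∘ Ea.symm, ?_⟩
        have key : ∀ (j : Fin b) (t : Fin n),
            (∑ x : Fin a × Fin n, c x.1 z x.2 * H x.1 j x.2 t) = u (Eb (j, t)) := by
          intro j t
          have h3 : ((ncVecMulLinear H c) j) z t = (rowEmbed (R := R) z b (u ∘ Eb) j) z t := by
            rw [hc]
          simp only [ncVecMulLinear, LinearMap.coe_mk, AddHom.coe_mk, Matrix.sum_apply,
            Matrix.mul_apply, rowEmbed_apply, Function.comp_apply, if_true,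
            eq_self_iff_true] at h3
          rw [Fintype.sum_prod_type]
          simpa using h3
        funext q
        rw [Matrix.vecMulLinear_apply]
        show ∑ p, _ * Ht p q = u q
        rw [← Equiv.sum_comp Ea (fun p => (((fun p : Fin a × Fin n => c p.1 z p.2) ∘ Ea.symm) p) * Ht p q)]
        simp only [Function.comp_apply, Equiv.symm_apply_apply, hHt, Matrix.of_apply]
        rw [key (Eb.symm q).1 (Eb.symm q).2]
        rw [Prod.mk.eta, Equiv.apply_symm_apply]
      · rintro ⟨w, rfl⟩
        apply Subtype.ext
        rw [π'apply, Submodule.coe_zero]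
        have hrow : rowEmbed (R := R) z b ((Ht.vecMulLinear w) ∘ Eb)
            = ncVecMulLinear H (fun i => Matrix.of fun s t => if s = z then w (Ea (i, t)) else 0) := by
          funext j
          ext s t
          simp only [rowEmbed_apply, ncVecMulLinear, LinearMap.coe_mk, AddHom.coe_mk,
            Matrix.sum_apply, Matrix.mul_apply, Matrix.of_apply, Function.comp_apply,
            Matrix.vecMulLinear_apply]
          by_cases hs : s = z
          · simp only [hs, if_pos rfl, ite_mul, zero_mul]
            show (w ᵥ* Ht) (Eb (j, t)) = _
            rw [Matrix.vecMul]
            show ∑ p, w p * Ht p (Eb (j, t)) = _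
            rw [← Equiv.sum_comp Ea (fun p => w p * Ht p (Eb (j, t)))]
            simp only [hHt, Matrix.of_apply, Equiv.symm_apply_apply, Fintype.sum_prod_type]
            simp
          · simp [hs]
        rw [hrow]
        have : ncVecMulLinear H (fun i => Matrix.of fun s t => if s = z then w (Ea (i, t)) else 0)
            ∈ LinearMap.range (ncVecMulLinear H) := ⟨_, rfl⟩
        rw [← hπ.2, LinearMap.mem_ker] at this
        exact this
  -- now the ideal containment
  rw [lamFit, Ideal.span_le]
  rintro r ⟨f, rfl⟩
  have hminors : minorsIdeal R Ht ≤ fitIdeal R (eComponent n R M z) :=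
    le_iSup_of_le (a * n) <| le_iSup_of_le (b * n) <| le_iSup_of_le Ht <|
      le_iSup_of_le π' <| le_iSup_of_le hpres le_rfl
  apply hminors
  have hdet : Matrix.det (Matrix.of fun p q : Fin b × Fin n => (H (f p.1) q.1) p.2 q.2)
      = ((Ht.submatrix (fun p => Ea (f (Eb.symm p).1, (Eb.symm p).2)) id).det) := by
    have : Ht.submatrix (fun p => Ea (f (Eb.symm p).1, (Eb.symm p).2)) id
        = (Matrix.of fun p q : Fin b × Fin n => (H (f p.1) q.1) p.2 q.2).submatrix Eb.symm Eb.symm := by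
      ext p q
      simp [hHt, Matrix.submatrix_apply]
    rw [this, Matrix.det_submatrix_equiv_self]
  exact Ideal.subset_span ⟨_, hdet⟩

end PartA

section PartB
variable {n : ℕ} {R : Type*} [CommRing R] {M : Type*} [AddCommGroup M]
  [Module (Matrix (Fin n) (Fin n) R) M] [Module R M]
  [IsScalarTower R (Matrix (Fin n) (Fin n) R) M]

/-- The `Λ`-linear map `Λ^b → M` sending the `j`-th basis vector to `nv j`. -/
def piLam {b : ℕ} (nv : Fin b → M) :
    (Fin b → Matrix (Fin n) (Fin n) R) →ₗ[Matrix (Fin n) (Fin n) R] M where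
  toFun x := ∑ j, x j • nv j
  map_add' x y := by simp [add_smul, Finset.sum_add_distrib]
  map_smul' c x := by
    simp only [Pi.smul_apply, smul_eq_mul, mul_smul, RingHom.id_apply]
    rw [← Finset.smul_sum]

@[simp] lemma piLam_apply {b : ℕ} (nv : Fin b → M)
    (x : Fin b → Matrix (Fin n) (Fin n) R) : piLam nv x = ∑ j, x j • nv j := rfl

lemma sum_stdBasis_diag_eq_one (hn : 0 < n) :
    (∑ i : Fin n, Matrix.single i i (1 : R)) = 1 := by
  ext p q
  rw [Matrix.sum_apply]
  rcases eq_or_ne p q with rfl | h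
  · rw [Matrix.one_apply_eq]
    rw [Finset.sum_eq_single p]
    · exact Matrix.single_apply_same p p 1
    · intro i _ hi
      exact Matrix.single_apply_of_ne _ _ _ _ _ (by tauto)
    · intro h; exact absurd (Finset.mem_univ p) h
  · rw [Matrix.one_apply_ne h]
    apply Finset.sum_eq_zero
    intro i _
    refine Matrix.single_apply_of_ne _ _ _ _ _ ?_
    rintro ⟨rfl, rfl⟩; exact h rfl

lemma std_mul_mul_std (z s : Fin n) (A : Matrix (Fin n) (Fin n) R) :
    Matrix.single z s (1 : R) * A * Matrix.single z z (1 : R)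
      = A s z • Matrix.single z z (1 : R) := by
  ext p q
  rw [Matrix.mul_assoc]
  by_cases hp : p = z
  · rw [hp, Matrix.single_mul_apply_same, one_mul]
    by_cases hq : q = z
    · rw [hq, Matrix.mul_single_apply_same, mul_one, Matrix.smul_apply,
        Matrix.single_apply_same, smul_eq_mul, mul_one]
    · rw [Matrix.mul_single_apply_of_ne (1 : R) z z s q hq, Matrix.smul_apply,
        Matrix.single_apply_of_ne _ _ _ _ _ (by tauto), smul_zero]
  · rw [Matrix.single_mul_apply_of_ne (1 : R) z s p q hp, Matrix.smul_apply,
      Matrix.single_apply_of_ne _ _ _ _ _ (by tauto), smul_zero]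

end PartB

section PartB2
variable {n : ℕ} {R : Type*} [CommRing R] {M : Type*} [AddCommGroup M]
  [Module (Matrix (Fin n) (Fin n) R) M] [Module R M]
  [IsScalarTower R (Matrix (Fin n) (Fin n) R) M]

theorem fitIdeal_le_iSup (hn : 0 < n) (z : Fin n) :
    fitIdeal R (eComponent n R M z) ≤
      ⨆ (a : ℕ) (b : ℕ) (_ : b ≤ a) (H : Matrix (Fin a) (Fin b) (Matrix (Fin n) (Fin n) R))
        (π : (Fin b → Matrix (Fin n) (Fin n) R) →ₗ[Matrix (Fin n) (Fin n) R] M)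
        (_ : IsNCPresentation H M π), lamFit n R H := by
  classical
  rw [fitIdeal]
  refine iSup_le fun a => iSup_le fun b => iSup_le fun G => iSup_le fun πR =>
    iSup_le fun hπR => ?_
  rw [minorsIdeal, Ideal.span_le]
  rintro r ⟨g, rfl⟩
  set nvec : Fin b → M := fun j => ((πR (Pi.single j 1) : eComponent n R M z) : M)
    with hnvecdef
  have hmemN : ∀ j, nvec j ∈ eComponent n R M z := fun j => (πR (Pi.single j 1)).2
  have he_nvec : ∀ j, Matrix.single z z (1 : R) • nvec j = nvec j :=
    fun j => eSmul_of_mem z (hmemN j)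
  have coe_piR : ∀ y : Fin b → R,
      ((πR y : eComponent n R M z) : M) = ∑ j, y j • nvec j := by
    intro y
    conv_lhs => rw [← Finset.univ_sum_single y]
    rw [map_sum, Submodule.coe_sum]
    refine Finset.sum_congr rfl fun j _ => ?_
    have h1 : (Pi.single j (y j) : Fin b → R)
        = y j • (Pi.single j (1 : R) : Fin b → R) := by
      rw [← Pi.single_smul, smul_eq_mul, mul_one]
    rw [h1, πR.map_smul, SetLike.val_smul]
  -- the rows of the presentation matrix over Λ
  set rV : Fin a → (Fin b → Matrix (Fin n) (Fin n) R) :=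
    fun i j => G i j • Matrix.single z z (1 : R) with hrV
  set rW : Fin b → (Fin b → Matrix (Fin n) (Fin n) R) :=
    fun k j => if j = k then 1 - Matrix.single z z (1 : R) else 0 with hrW
  set rowFun : (Fin a ⊕ Fin b) ⊕ Fin b → (Fin b → Matrix (Fin n) (Fin n) R) :=
    Sum.elim (Sum.elim rV rW) (fun k => rV (g k) + rW k) with hrowFun
  set σ : Fin (a + b + b) ≃ (Fin a ⊕ Fin b) ⊕ Fin b :=
    finSumFinEquiv.symm.trans (Equiv.sumCongr finSumFinEquiv.symm (Equiv.refl (Fin b)))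
    with hσ
  set Hg : Matrix (Fin (a + b + b)) (Fin b) (Matrix (Fin n) (Fin n) R) :=
    Matrix.of fun i => rowFun (σ i) with hHg
  -- each row is in the kernel of piLam (n := n) (R := R) nvec
  have hkerV : ∀ i, piLam (n := n) (R := R) nvec (rV i) = 0 := by
    intro i
    rw [piLam_apply]
    have h1 : ∀ j ∈ Finset.univ, (rV i j) • nvec j = G i j • nvec j := by
      intro j _
      simp only [hrV]
      rw [smul_assoc, he_nvec]
    rw [Finset.sum_congr rfl h1, ← coe_piR]
    have h2 : G i ∈ LinearMap.ker πR := by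
      rw [hπR.2, range_vecMulLinear]
      exact Submodule.subset_span ⟨i, rfl⟩
    rw [LinearMap.mem_ker] at h2
    rw [h2, Submodule.coe_zero]
  have hkerW : ∀ k, piLam (n := n) (R := R) nvec (rW k) = 0 := by
    intro k
    rw [piLam_apply]
    have h1 : ∀ j ∈ Finset.univ, (rW k j) • nvec j
        = if j = k then (1 - Matrix.single z z (1 : R)) • nvec j else 0 := by
      intro j _
      simp only [hrW]
      split_ifs <;> simp
    rw [Finset.sum_congr rfl h1, Finset.sum_ite_eq' Finset.univ k
      (fun j => (1 - Matrix.single z z (1 : R)) • nvec j),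
      if_pos (Finset.mem_univ k), sub_smul, one_smul, he_nvec, sub_self]
  have hkerS : ∀ k, piLam (n := n) (R := R) nvec (rV (g k) + rW k) = 0 := by
    intro k
    rw [map_add, hkerV, hkerW, add_zero]
  -- surjectivity
  have hsurj : Function.Surjective (piLam (n := n) (R := R) nvec) := by
    intro m
    have hpick : ∀ i : Fin n, ∃ y : Fin b → R,
        ((πR y : eComponent n R M z) : M)
          = Matrix.single z z (1 : R) • (Matrix.single z i (1 : R) • m) := by
      intro i
      obtain ⟨y, hy⟩ := hπR.1
        ⟨Matrix.single z z (1 : R) • (Matrix.single z i (1 : R) • m), ⟨_, rfl⟩⟩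
      exact ⟨y, by rw [hy]⟩
    choose y hy using hpick
    refine ⟨fun j => ∑ i, y i j • Matrix.single i z (1 : R), ?_⟩
    rw [piLam_apply]
    calc
      ∑ j, (∑ i, y i j • Matrix.single i z (1 : R)) • nvec j
          = ∑ j, ∑ i, (y i j • Matrix.single i z (1 : R)) • nvec j := by
            refine Finset.sum_congr rfl fun j _ => ?_
            rw [Finset.sum_smul]
      _ = ∑ i, ∑ j, y i j • (Matrix.single i z (1 : R) • nvec j) := by
            rw [Finset.sum_comm]
            exact Finset.sum_congr rfl fun i _ =>
              Finset.sum_congr rfl fun j _ => smul_assoc _ _ _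
      _ = ∑ i, Matrix.single i z (1 : R) • ∑ j, y i j • nvec j := by
            refine Finset.sum_congr rfl fun i _ => ?_
            rw [Finset.smul_sum]
            exact Finset.sum_congr rfl fun j _ => (smul_comm _ _ _).symm
      _ = ∑ i, Matrix.single i z (1 : R)
            • (Matrix.single z z (1 : R) • (Matrix.single z i (1 : R) • m)) := by
            refine Finset.sum_congr rfl fun i _ => ?_
            rw [← coe_piR, hy]
      _ = ∑ i, Matrix.single i i (1 : R) • m := by
            refine Finset.sum_congr rfl fun i _ => ?_
            rw [smul_smul, smul_smul, Matrix.single_mul_single_same,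
              Matrix.single_mul_single_same, one_mul, one_mul]
      _ = (∑ i : Fin n, Matrix.single i i (1 : R)) • m := by rw [Finset.sum_smul]
      _ = m := by rw [sum_stdBasis_diag_eq_one hn, one_smul]
  -- kernel computation
  have hker : LinearMap.ker (piLam (n := n) (R := R) nvec)
      = Submodule.span (Matrix (Fin n) (Fin n) R) (Set.range rowFun) := by
    apply le_antisymm
    · intro x hx
      rw [LinearMap.mem_ker, piLam_apply] at hx
      have hcomp : ∀ s : Fin n,
          ((πR (fun j => x j s z) : eComponent n R M z) : M) = 0 := by
        intro s
        rw [coe_piR]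
        have h0 : ∑ j, Matrix.single z s (1 : R) • (x j • nvec j) = 0 := by
          rw [← Finset.smul_sum, hx, smul_zero]
        calc ∑ j, x j s z • nvec j
            = ∑ j, Matrix.single z s (1 : R) • (x j • nvec j) := by
              refine Finset.sum_congr rfl fun j _ => ?_
              conv_rhs => rw [← he_nvec j]
              rw [smul_smul, smul_smul, std_mul_mul_std z s (x j), smul_assoc, he_nvec]
          _ = 0 := h0
      have hxker : ∀ s : Fin n, ∃ ws : Fin a → R,
          G.vecMulLinear ws = fun j => x j s z := by
        intro s
        have hmem : (fun j => x j s z) ∈ LinearMap.ker πR := by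
          rw [LinearMap.mem_ker]
          apply Subtype.ext
          rw [hcomp s, Submodule.coe_zero]
        rw [hπR.2] at hmem
        exact hmem
      choose w hw using hxker
      have hxe : (fun j => x j * Matrix.single z z (1 : R))
          = ∑ i, (∑ s, w s i • Matrix.single s z (1 : R)) • rV i := by
        funext j
        rw [Finset.sum_apply]
        have h1 : ∀ i ∈ Finset.univ,
            ((∑ s, w s i • Matrix.single s z (1 : R)) • rV i) j
            = ∑ s, (w s i * G i j) • Matrix.single s z (1 : R) := by
          intro i _
          simp only [hrV, Pi.smul_apply, smul_eq_mul]
          rw [Finset.sum_mul]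
          refine Finset.sum_congr rfl fun s _ => ?_
          rw [smul_mul_assoc, mul_smul_comm, Matrix.single_mul_single_same,
            one_mul, smul_smul]
        rw [Finset.sum_congr rfl h1, Finset.sum_comm]
        have h2 : ∀ s ∈ Finset.univ,
            (∑ i, (w s i * G i j) • Matrix.single s z (1 : R))
            = x j s z • Matrix.single s z (1 : R) := by
          intro s _
          rw [← Finset.sum_smul]
          congr 1
          have h3 := congrFun (hw s) j
          rw [Matrix.vecMulLinear_apply] at h3
          rw [← h3]
          rfl
        rw [Finset.sum_congr rfl h2]
        ext p q
        rw [Matrix.sum_apply]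
        by_cases hq : q = z
        · rw [hq, Matrix.mul_single_apply_same, mul_one,
            Finset.sum_eq_single p]
          · rw [Matrix.smul_apply, Matrix.single_apply_same, smul_eq_mul, mul_one]
          · intro s _ hs
            rw [Matrix.smul_apply,
              Matrix.single_apply_of_ne _ _ _ _ _ (by tauto), smul_zero]
          · intro hmem'; exact absurd (Finset.mem_univ p) hmem'
        · rw [Matrix.mul_single_apply_of_ne (1 : R) z z p q hq]
          symm
          apply Finset.sum_eq_zero
          intro s _
          rw [Matrix.smul_apply,
            Matrix.single_apply_of_ne _ _ _ _ _ (by tauto), smul_zero]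
      have hxf : (fun j => x j * (1 - Matrix.single z z (1 : R)))
          = ∑ k, x k • rW k := by
        funext j
        rw [Finset.sum_apply]
        have h1 : ∀ k ∈ Finset.univ, (x k • rW k) j
            = if j = k then x j * (1 - Matrix.single z z (1 : R)) else 0 := by
          intro k _
          simp only [hrW, Pi.smul_apply, smul_eq_mul]
          split_ifs with h
          · rw [h]
          · rw [mul_zero]
        rw [Finset.sum_congr rfl h1, Finset.sum_ite_eq Finset.univ j
          (fun _ => x j * (1 - Matrix.single z z (1 : R))),
          if_pos (Finset.mem_univ j)]
      have hxsplit : x = (fun j => x j * Matrix.single z z (1 : R))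
          + (fun j => x j * (1 - Matrix.single z z (1 : R))) := by
        funext j
        show x j = x j * Matrix.single z z (1 : R)
          + x j * (1 - Matrix.single z z (1 : R))
        rw [← mul_add]
        have h4 : Matrix.single z z (1 : R)
            + (1 - Matrix.single z z (1 : R)) = 1 := by abel
        rw [h4, mul_one]
      have m1 : (fun j => x j * Matrix.single z z (1 : R))
          ∈ Submodule.span (Matrix (Fin n) (Fin n) R) (Set.range rowFun) := by
        rw [hxe]
        exact Submodule.sum_mem _ fun i _ => Submodule.smul_mem _ _
          (Submodule.subset_span ⟨Sum.inl (Sum.inl i), rfl⟩)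
      have m2 : (fun j => x j * (1 - Matrix.single z z (1 : R)))
          ∈ Submodule.span (Matrix (Fin n) (Fin n) R) (Set.range rowFun) := by
        rw [hxf]
        exact Submodule.sum_mem _ fun k _ => Submodule.smul_mem _ _
          (Submodule.subset_span ⟨Sum.inl (Sum.inr k), rfl⟩)
      exact hxsplit ▸ Submodule.add_mem _ m1 m2
    · rw [Submodule.span_le]
      rintro _ ⟨c, rfl⟩
      simp only [SetLike.mem_coe, LinearMap.mem_ker]
      rcases c with (i | k) | k
      · exact hkerV i
      · exact hkerW k
      · exact hkerS k
  have hpres : IsNCPresentation Hg M (piLam (n := n) (R := R) nvec) := by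
    refine ⟨hsurj, ?_⟩
    rw [range_ncVecMulLinear, hker]
    congr 1
    have h1 : (fun i j => Hg i j) = rowFun ∘ σ := rfl
    rw [h1]
    exact (σ.surjective.range_comp rowFun).symm
  -- determinant identity
  have hdet : (Matrix.of fun p q : Fin b × Fin n =>
      (Hg (σ.symm (Sum.inr p.1)) q.1) p.2 q.2).det = (G.submatrix g id).det := by
    set D : Matrix (Fin b × Fin n) (Fin b × Fin n) R := Matrix.of fun p q =>
      (Hg (σ.symm (Sum.inr p.1)) q.1) p.2 q.2 with hD
    have hDrow : ∀ p q : Fin b × Fin n,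
        D p q = G (g p.1) q.1 * (Matrix.single z z (1 : R)) p.2 q.2
          + (if q.1 = p.1 then (1 - Matrix.single z z (1 : R)) p.2 q.2 else 0) := by
      intro p q
      have h1 : Hg (σ.symm (Sum.inr p.1)) = rV (g p.1) + rW p.1 := by
        show rowFun (σ (σ.symm (Sum.inr p.1))) = _
        rw [Equiv.apply_symm_apply]
        rfl
      show (Hg (σ.symm (Sum.inr p.1)) q.1) p.2 q.2 = _
      rw [h1]
      show (rV (g p.1) q.1 + rW p.1 q.1) p.2 q.2 = _
      simp only [hrV, hrW]
      rw [Matrix.add_apply, Matrix.smul_apply, smul_eq_mul]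
      congr 1
      rw [apply_ite (fun X : Matrix (Fin n) (Fin n) R => X p.2 q.2), Matrix.zero_apply]
    set pz : Fin b × Fin n → Prop := fun x => x.2 = z with hpz
    set eqv := Equiv.sumCompl pz with heqv
    set A1 : Matrix {x : Fin b × Fin n // pz x} {x : Fin b × Fin n // pz x} R :=
      Matrix.of (fun p q => G (g p.1.1) q.1.1) with hA1
    have hblocks : D.submatrix eqv eqv
        = Matrix.fromBlocks A1 ((D.submatrix eqv eqv).toBlocks₁₂) 0 1 := by
      ext pq rs
      match pq, rs with
      | Sum.inl p, Sum.inl q =>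
        have hp2 : (p : {x // pz x}).1.2 = z := p.2
        have hq2 : (q : {x // pz x}).1.2 = z := q.2
        rw [Matrix.fromBlocks_apply₁₁, Matrix.submatrix_apply,
          Equiv.sumCompl_apply_inl, Equiv.sumCompl_apply_inl, hDrow, hp2, hq2,
          Matrix.single_apply_same, mul_one]
        have hz0 : (1 - Matrix.single z z (1 : R)) z z = 0 := by
          rw [Matrix.sub_apply, Matrix.one_apply_eq, Matrix.single_apply_same,
            sub_self]
        rw [hz0, ite_self, add_zero]
        rfl
      | Sum.inl p, Sum.inr q => rfl
      | Sum.inr p, Sum.inl q =>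
        have hp2 : ¬ ((p : {x // ¬ pz x}).1.2 = z) := p.2
        have hq2 : (q : {x // pz x}).1.2 = z := q.2
        rw [Matrix.fromBlocks_apply₂₁, Matrix.submatrix_apply,
          Equiv.sumCompl_apply_inl, Equiv.sumCompl_apply_inr, hDrow, hq2]
        have h1 : Matrix.single z z (1 : R) (p : {x // ¬ pz x}).1.2 z = 0 :=
          Matrix.single_apply_of_ne _ _ _ _ _ (by tauto)
        have h2 : (1 - Matrix.single z z (1 : R)) (p : {x // ¬ pz x}).1.2 z = 0 := by
          rw [Matrix.sub_apply, Matrix.one_apply_ne hp2, h1, sub_zero]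
        rw [h1, mul_zero, h2, ite_self, add_zero, Matrix.zero_apply]
      | Sum.inr p, Sum.inr q =>
        have hp2 : ¬ ((p : {x // ¬ pz x}).1.2 = z) := p.2
        have hq2 : ¬ ((q : {x // ¬ pz x}).1.2 = z) := q.2
        rw [Matrix.fromBlocks_apply₂₂, Matrix.submatrix_apply,
          Equiv.sumCompl_apply_inr, Equiv.sumCompl_apply_inr, hDrow]
        have h1 : Matrix.single z z (1 : R)
            (p : {x // ¬ pz x}).1.2 (q : {x // ¬ pz x}).1.2 = 0 :=
          Matrix.single_apply_of_ne _ _ _ _ _ (by tauto)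
        rw [h1, mul_zero, zero_add]
        rcases eq_or_ne p q with rfl | hpq
        · rw [if_pos rfl, Matrix.one_apply_eq, Matrix.sub_apply, Matrix.one_apply_eq,
            Matrix.single_apply_of_ne _ _ _ _ _ (by tauto), sub_zero]
        · rw [Matrix.one_apply_ne hpq]
          by_cases h : (q : {x // ¬ pz x}).1.1 = (p : {x // ¬ pz x}).1.1
          · rw [if_pos h]
            have hne : (p : {x // ¬ pz x}).1.2 ≠ (q : {x // ¬ pz x}).1.2 := by
              intro h2
              exact hpq (Subtype.ext (Prod.ext h.symm h2))
            rw [Matrix.sub_apply, Matrix.one_apply_ne hne,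
              Matrix.single_apply_of_ne _ _ _ _ _ (by tauto), sub_zero]
          · rw [if_neg h]
    have hdet1 := Matrix.det_submatrix_equiv_self eqv D
    rw [← hdet1, hblocks, Matrix.det_fromBlocks_zero₂₁, Matrix.det_one, mul_one]
    let β : {x : Fin b × Fin n // pz x} ≃ Fin b :=
      { toFun := fun x => x.1.1
        invFun := fun j => ⟨(j, z), rfl⟩
        left_inv := fun x => Subtype.ext (Prod.ext rfl x.2.symm)
        right_inv := fun j => rfl }
    have hβ : A1 = (G.submatrix g id).submatrix β β := by
      ext p q
      rw [hA1]
      rfl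
    rw [hβ, Matrix.det_submatrix_equiv_self]
  -- assemble
  have hb : b ≤ a + b + b := by omega
  have hle : lamFit n R Hg ≤
      ⨆ (a : ℕ) (b : ℕ) (_ : b ≤ a) (H : Matrix (Fin a) (Fin b) (Matrix (Fin n) (Fin n) R))
        (π : (Fin b → Matrix (Fin n) (Fin n) R) →ₗ[Matrix (Fin n) (Fin n) R] M)
        (_ : IsNCPresentation H M π), lamFit n R H :=
    le_iSup_of_le (a + b + b) <| le_iSup_of_le b <| le_iSup_of_le hb <|
      le_iSup_of_le Hg <| le_iSup_of_le (piLam (n := n) (R := R) nvec) <| le_iSup_of_le hpres le_rfl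
  exact hle (Ideal.subset_span ⟨fun k => σ.symm (Sum.inr k), hdet.symm⟩)

end PartB2


/-- For a finitely presented module `M` over `Λ = M_{n×n}(R)`:
(a) for every finite presentation `Λ^a --H--> Λ^b ->> M` with `a ≥ b` one has
`Fit_Λ(H) ⊆ Fit_R(e_{11}M)`; and
(b) `Fit_R(e_{11}M)` is the supremum of the ideals `Fit_Λ(H)` over all such
presentations.  In particular the maximal Fitting invariant of `M` over `Λ`
equals `Fit_Λ(M) = Fit_R(e_{11}M)`. -/
theorem lamFit_le_and_iSup_eq (n : ℕ) (hn : 0 < n) (R : Type*) [CommRing R] (M : Type*)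
    [AddCommGroup M] [Module (Matrix (Fin n) (Fin n) R) M] [Module R M]
    [IsScalarTower R (Matrix (Fin n) (Fin n) R) M]
    [Module.FinitePresentation (Matrix (Fin n) (Fin n) R) M] :
    (∀ (a b : ℕ), b ≤ a → ∀ (H : Matrix (Fin a) (Fin b) (Matrix (Fin n) (Fin n) R))
      (π : (Fin b → Matrix (Fin n) (Fin n) R) →ₗ[Matrix (Fin n) (Fin n) R] M),
      IsNCPresentation H M π → lamFit n R H ≤ fitIdeal R (eComponent n R M ⟨0, hn⟩)) ∧
    fitIdeal R (eComponent n R M ⟨0, hn⟩) =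
      ⨆ (a : ℕ) (b : ℕ) (_ : b ≤ a) (H : Matrix (Fin a) (Fin b) (Matrix (Fin n) (Fin n) R))
        (π : (Fin b → Matrix (Fin n) (Fin n) R) →ₗ[Matrix (Fin n) (Fin n) R] M)
        (_ : IsNCPresentation H M π), lamFit n R H := by
  constructor
  · intro a b _ H π hπ
    exact lamFit_le_fitIdeal ⟨0, hn⟩ H π hπ
  · apply le_antisymm
    · exact fitIdeal_le_iSup hn ⟨0, hn⟩
    · exact iSup_le fun a => iSup_le fun b => iSup_le fun _ => iSup_le fun H =>
        iSup_le fun π => iSup_le fun hπ => lamFit_le_fitIdeal ⟨0, hn⟩ H π hπ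
end
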